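/- arXiv:1502.04251 — 6 statements merged into one kernel-verified Lean document; each statement's English description precedes it below -/
import Mathlib

section
/- Let α₁,α₂,α₃,α₄ be the roots of g(x)=3x⁴+b₂x³+3b₄x²+3b₆x+b₈ in an algebraically closed field of characteristic ≠ 2,3, where b₂,b₄,b₆,b₈,Δ are the standard quantities attached to Weierstrass coefficients. Then each of b₄−3(α₁α₂+α₃α₄), b₄−3(α₁α₃+α₂α₄), b₄−3(α₁α₄+α₂α₃) is a cube root of Δ. -/
/-- Over an algebraically closed field of characteristic `≠ 2, 3`, let `α₁, α₂, α₃, α₄` be the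
roots (with multiplicity) of `g(x) = 3x⁴ + b₂x³ + 3b₄x² + 3b₆x + b₈`, where `b₂, b₄, b₆, b₈, Δ`
are the standard quantities attached to Weierstrass coefficients `a₁, …, a₆`. Then each of
`b₄ − 3(α₁α₂ + α₃α₄)`, `b₄ − 3(α₁α₃ + α₂α₄)`, `b₄ − 3(α₁α₄ + α₂α₃)` is a cube root of `Δ`. -/
theorem cube_roots_of_Delta (F : Type*) [Field F] [IsAlgClosed F]
    (h2 : (2 : F) ≠ 0) (h3 : (3 : F) ≠ 0)
    (a₁ a₂ a₃ a₄ a₆ b₂ b₄ b₆ b₈ Δ α₁ α₂ α₃ α₄ : F)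
    (hb₂ : b₂ = a₁ ^ 2 + 4 * a₂)
    (hb₄ : b₄ = a₁ * a₃ + 2 * a₄)
    (hb₆ : b₆ = a₃ ^ 2 + 4 * a₆)
    (hb₈ : b₈ = a₁ ^ 2 * a₆ - a₁ * a₃ * a₄ + 4 * a₂ * a₆ + a₂ * a₃ ^ 2 - a₄ ^ 2)
    (hΔ : Δ = -b₂ ^ 2 * b₈ - 8 * b₄ ^ 3 - 27 * b₆ ^ 2 + 9 * b₂ * b₄ * b₆)
    (hroots : ∀ x : F, 3 * x ^ 4 + b₂ * x ^ 3 + 3 * b₄ * x ^ 2 + 3 * b₆ * x + b₈ =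
      3 * (x - α₁) * (x - α₂) * (x - α₃) * (x - α₄)) :
    (b₄ - 3 * (α₁ * α₂ + α₃ * α₄)) ^ 3 = Δ ∧
    (b₄ - 3 * (α₁ * α₃ + α₂ * α₄)) ^ 3 = Δ ∧
    (b₄ - 3 * (α₁ * α₄ + α₂ * α₃)) ^ 3 = Δ := by
  have h6 : (6 : F) ≠ 0 := by
    have := mul_ne_zero h2 h3
    norm_num at this ⊢
    exact this
  have h18 : (18 : F) ≠ 0 := by
    have := mul_ne_zero h3 h6
    norm_num at this ⊢
    exact this
  have E0 := hroots 0
  have E1 := hroots 1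
  have Em1 := hroots (-1)
  have E2 := hroots 2
  -- elementary symmetric functions
  have he1 : b₂ = -3 * (α₁ + α₂ + α₃ + α₄) := by
    have key : (6 : F) * b₂ = 6 * (-3 * (α₁ + α₂ + α₃ + α₄)) := by
      linear_combination E2 + 3 * E0 - 3 * E1 - Em1
    exact mul_left_cancel₀ h6 key
  have he2 : b₄ = α₁ * α₂ + α₁ * α₃ + α₁ * α₄ + α₂ * α₃ + α₂ * α₄ + α₃ * α₄ := by
    have key : (6 : F) * b₄ =
        6 * (α₁ * α₂ + α₁ * α₃ + α₁ * α₄ + α₂ * α₃ + α₂ * α₄ + α₃ * α₄) := by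
      linear_combination E1 + Em1 - 2 * E0
    exact mul_left_cancel₀ h6 key
  have he3 : b₆ = -(α₁ * α₂ * α₃ + α₁ * α₂ * α₄ + α₁ * α₃ * α₄ + α₂ * α₃ * α₄) := by
    have key : (18 : F) * b₆ =
        18 * (-(α₁ * α₂ * α₃ + α₁ * α₂ * α₄ + α₁ * α₃ * α₄ + α₂ * α₃ * α₄)) := by
      linear_combination 6 * E1 - 2 * Em1 - E2 - 3 * E0
    exact mul_left_cancel₀ h18 key
  have he4 : b₈ = 3 * (α₁ * α₂ * α₃ * α₄) := by
    linear_combination E0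
  -- the standard constraint 4b₈ = b₂b₆ - b₄²
  have hCb : b₄ ^ 2 - b₂ * b₆ + 4 * b₈ = 0 := by
    rw [hb₂, hb₄, hb₆, hb₈]; ring
  rw [he1, he2, he3, he4] at hCb
  refine ⟨?_, ?_, ?_⟩ <;> rw [hΔ, he1, he2, he3, he4]
  · linear_combination (9 * (α₁ + α₂) * (α₃ + α₄)) * hCb
  · linear_combination (9 * (α₁ + α₃) * (α₂ + α₄)) * hCb
  · linear_combination (9 * (α₁ + α₄) * (α₂ + α₃)) * hCb
end

section
/- With notation as in the 3-division polynomial setting, if Δ^{1/3} = b₄ − 3(α₁α₂ + α₃α₄), s = α₁+α₂, t = α₁α₂, then g(x) = (x² − sx + t)(3x² + (3s + b₂)x − (3t + Δ^{1/3} − b₄)). -/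
/-- In a field of characteristic `≠ 2, 3`, let `g(x) = 3x⁴ + b₂x³ + 3b₄x² + 3b₆x + b₈` have
roots `α₁, α₂, α₃, α₄` (so in particular `b₂ = −3(α₁+α₂+α₃+α₄)`). If
`Δ^{1/3} = b₄ - 3(α₁α₂ + α₃α₄)`, `s = α₁ + α₂` and `t = α₁α₂`, then
`g(x) = (x² − sx + t)(3x² + (3s + b₂)x − (3t + Δ^{1/3} − b₄))`. -/
theorem g_factorization (F : Type*) [Field F] (h2 : (2 : F) ≠ 0) (h3 : (3 : F) ≠ 0)
    (b₂ b₄ b₆ b₈ δ s t α₁ α₂ α₃ α₄ : F)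
    (hb₂ : b₂ = -3 * (α₁ + α₂ + α₃ + α₄))
    (hroots : ∀ x : F, 3 * x ^ 4 + b₂ * x ^ 3 + 3 * b₄ * x ^ 2 + 3 * b₆ * x + b₈ =
      3 * (x - α₁) * (x - α₂) * (x - α₃) * (x - α₄))
    (hδ : δ = b₄ - 3 * (α₁ * α₂ + α₃ * α₄))
    (hs : s = α₁ + α₂) (ht : t = α₁ * α₂) :
    ∀ x : F, 3 * x ^ 4 + b₂ * x ^ 3 + 3 * b₄ * x ^ 2 + 3 * b₆ * x + b₈ =
      (x ^ 2 - s * x + t) * (3 * x ^ 2 + (3 * s + b₂) * x - (3 * t + δ - b₄)) := by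
  intro x
  rw [hroots x, hb₂, hδ, hs, ht]
  ring
end

section
/- The discriminant of the quartic g(x) = 3x⁴ + b₂x³ + 3b₄x² + 3b₆x + b₈ equals −27Δ², where Δ is the discriminant of the associated Weierstrass equation. Concretely, 3⁶ · ∏_{1≤i<j≤4} (αᵢ−αⱼ)² = −27Δ² where αᵢ are the roots of g. -/
set_option maxHeartbeats 1000000 in
/-- Over an algebraically closed field of characteristic `≠ 2, 3`, with Weierstrass coefficients
`a₁, …, a₆` and standard derived quantities `b₂, b₄, b₆, b₈, Δ`, if `α₁, α₂, α₃, α₄` are the roots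
of `g(x) = 3x⁴ + b₂x³ + 3b₄x² + 3b₆x + b₈`, then
`3⁶ · ∏_{1 ≤ i < j ≤ 4} (αᵢ − αⱼ)² = −27Δ²`, i.e. the discriminant of `g` equals `−27Δ²`. -/
theorem discriminant_of_g (F : Type*) [Field F] [IsAlgClosed F]
    (h2 : (2 : F) ≠ 0) (h3 : (3 : F) ≠ 0)
    (a₁ a₂ a₃ a₄ a₆ b₂ b₄ b₆ b₈ Δ α₁ α₂ α₃ α₄ : F)
    (hb₂ : b₂ = a₁ ^ 2 + 4 * a₂)
    (hb₄ : b₄ = a₁ * a₃ + 2 * a₄)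
    (hb₆ : b₆ = a₃ ^ 2 + 4 * a₆)
    (hb₈ : b₈ = a₁ ^ 2 * a₆ - a₁ * a₃ * a₄ + 4 * a₂ * a₆ + a₂ * a₃ ^ 2 - a₄ ^ 2)
    (hΔ : Δ = -b₂ ^ 2 * b₈ - 8 * b₄ ^ 3 - 27 * b₆ ^ 2 + 9 * b₂ * b₄ * b₆)
    (hroots : ∀ x : F, 3 * x ^ 4 + b₂ * x ^ 3 + 3 * b₄ * x ^ 2 + 3 * b₆ * x + b₈ =
      3 * (x - α₁) * (x - α₂) * (x - α₃) * (x - α₄)) :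
    3 ^ 6 * ((α₁ - α₂) ^ 2 * (α₁ - α₃) ^ 2 * (α₁ - α₄) ^ 2 * (α₂ - α₃) ^ 2 * (α₂ - α₄) ^ 2 *
        (α₃ - α₄) ^ 2) = -27 * Δ ^ 2 := by
  have h12 : (12 : F) ≠ 0 := by
    have := mul_ne_zero (mul_ne_zero h2 h2) h3
    norm_num at this ⊢; exact this
  have h36 : (36 : F) ≠ 0 := by
    have := mul_ne_zero (mul_ne_zero (mul_ne_zero h2 h2) h3) h3
    norm_num at this ⊢; exact this
  have h18 : (18 : F) ≠ 0 := by
    have := mul_ne_zero (mul_ne_zero h2 h3) h3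
    norm_num at this ⊢; exact this
  have e1 : b₂ = -3 * (α₁ + α₂ + α₃ + α₄) := by
    apply mul_left_cancel₀ h12
    linear_combination hroots 2 - hroots (-2) - 2 * hroots 1 + 2 * hroots (-1)
  have e2 : b₄ = α₁*α₂ + α₁*α₃ + α₁*α₄ + α₂*α₃ + α₂*α₄ + α₃*α₄ := by
    apply mul_left_cancel₀ h18
    linear_combination hroots 2 + hroots (-2) - hroots 1 - hroots (-1)
  have e3 : b₆ = -(α₁*α₂*α₃ + α₁*α₂*α₄ + α₁*α₃*α₄ + α₂*α₃*α₄) := by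
    apply mul_left_cancel₀ h36
    linear_combination 8 * hroots 1 - 8 * hroots (-1) - hroots 2 + hroots (-2)
  have e4 : b₈ = 3 * (α₁*α₂*α₃*α₄) := by
    linear_combination hroots 0
  have hrel : b₄ ^ 2 = b₂ * b₆ - 4 * b₈ := by
    rw [hb₂, hb₄, hb₆, hb₈]; ring
  rw [e1, e2, e3, e4] at hrel
  rw [hΔ, e1, e2, e3, e4]
  linear_combination ((1728:F)*α₁^4*α₂^4 + (432:F)*α₁^4*α₂^3*α₃ + (432:F)*α₁^4*α₂^3*α₄ + (-1620:F)*α₁^4*α₂^2*α₃^2 + (-972:F)*α₁^4*α₂^2*α₃*α₄ + (-1620:F)*α₁^4*α₂^2*α₄^2 + (432:F)*α₁^4*α₂*α₃^3 + (-972:F)*α₁^4*α₂*α₃^2*α₄ + (-972:F)*α₁^4*α₂*α₃*α₄^2 + (432:F)*α₁^4*α₂*α₄^3 + (1728:F)*α₁^4*α₃^4 + (432:F)*α₁^4*α₃^3*α₄ + (-1620:F)*α₁^4*α₃^2*α₄^2 + (432:F)*α₁^4*α₃*α₄^3 + (1728:F)*α₁^4*α₄^4 + (432:F)*α₁^3*α₂^4*α₃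 + (432:F)*α₁^3*α₂^4*α₄ + (-972:F)*α₁^3*α₂^3*α₃^2 + (432:F)*α₁^3*α₂^3*α₃*α₄ + (-972:F)*α₁^3*α₂^3*α₄^2 + (-972:F)*α₁^3*α₂^2*α₃^3 + (648:F)*α₁^3*α₂^2*α₃^2*α₄ + (648:F)*α₁^3*α₂^2*α₃*α₄^2 + (-972:F)*α₁^3*α₂^2*α₄^3 + (432:F)*α₁^3*α₂*α₃^4 + (432:F)*α₁^3*α₂*α₃^3*α₄ + (648:F)*α₁^3*α₂*α₃^2*α₄^2 + (432:F)*α₁^3*α₂*α₃*α₄^3 + (432:F)*α₁^3*α₂*α₄^4 + (432:F)*α₁^3*α₃^4*α₄ + (-972:F)*α₁^3*α₃^3*α₄^2 + (-972:F)*α₁^3*α₃^2*α₄^3 + (432:F)*α₁^3*α₃*α₄^4 + (-1620:F)*α₁^2*α₂^4*α₃^2 + (-972:F)*α₁^2*α₂^4*α₃*α₄ + (-1620:F)*α₁^2*α₂^4*α₄^2 + (-972:F)*α₁^2*α₂^3*α₃^3 + (648:F)*α₁^2*α₂^3*α₃^2*α₄ + (648:F)*α₁^2*α₂^3*α₃*α₄^2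 + (-972:F)*α₁^2*α₂^3*α₄^3 + (-1620:F)*α₁^2*α₂^2*α₃^4 + (648:F)*α₁^2*α₂^2*α₃^3*α₄ + (11664:F)*α₁^2*α₂^2*α₃^2*α₄^2 + (648:F)*α₁^2*α₂^2*α₃*α₄^3 + (-1620:F)*α₁^2*α₂^2*α₄^4 + (-972:F)*α₁^2*α₂*α₃^4*α₄ + (648:F)*α₁^2*α₂*α₃^3*α₄^2 + (648:F)*α₁^2*α₂*α₃^2*α₄^3 + (-972:F)*α₁^2*α₂*α₃*α₄^4 + (-1620:F)*α₁^2*α₃^4*α₄^2 + (-972:F)*α₁^2*α₃^3*α₄^3 + (-1620:F)*α₁^2*α₃^2*α₄^4 + (432:F)*α₁*α₂^4*α₃^3 + (-972:F)*α₁*α₂^4*α₃^2*α₄ + (-972:F)*α₁*α₂^4*α₃*α₄^2 + (432:F)*α₁*α₂^4*α₄^3 + (432:F)*α₁*α₂^3*α₃^4 + (432:F)*α₁*α₂^3*α₃^3*α₄ + (648:F)*α₁*α₂^3*α₃^2*α₄^2 + (432:F)*α₁*α₂^3*α₃*α₄^3 + (432:F)*α₁*α₂^3*α₄^4 + (-972:F)*α₁*α₂^2*α₃^4*α₄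 + (648:F)*α₁*α₂^2*α₃^3*α₄^2 + (648:F)*α₁*α₂^2*α₃^2*α₄^3 + (-972:F)*α₁*α₂^2*α₃*α₄^4 + (-972:F)*α₁*α₂*α₃^4*α₄^2 + (432:F)*α₁*α₂*α₃^3*α₄^3 + (-972:F)*α₁*α₂*α₃^2*α₄^4 + (432:F)*α₁*α₃^4*α₄^3 + (432:F)*α₁*α₃^3*α₄^4 + (1728:F)*α₂^4*α₃^4 + (432:F)*α₂^4*α₃^3*α₄ + (-1620:F)*α₂^4*α₃^2*α₄^2 + (432:F)*α₂^4*α₃*α₄^3 + (1728:F)*α₂^4*α₄^4 + (432:F)*α₂^3*α₃^4*α₄ + (-972:F)*α₂^3*α₃^3*α₄^2 + (-972:F)*α₂^3*α₃^2*α₄^3 + (432:F)*α₂^3*α₃*α₄^4 + (-1620:F)*α₂^2*α₃^4*α₄^2 + (-972:F)*α₂^2*α₃^3*α₄^3 + (-1620:F)*α₂^2*α₃^2*α₄^4 + (432:F)*α₂*α₃^4*α₄^3 + (432:F)*α₂*α₃^3*α₄^4 + (1728:F)*α₃^4*α₄^4) * hrel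
end

section
/- Let 𝓔 be the elliptic curve over F₂ defined by y² + y = x³. Then for every positive integer m, the number of F_{2^m}-rational points of 𝓔 (including the point at infinity) equals 2^m + 1 − (√2 i)^m − (−√2 i)^m. In particular, for m even this is 2^m + 1 − 2·(−2)^{m/2}, and for m odd it is 2^m + 1. -/
open Finset

set_option linter.unusedSectionVars false

namespace SupersingularCount

variable {F : Type*} [Field F] [Fintype F] [DecidableEq F] [CharP F 2]

/-- the image of the Artin–Schreier map `y ↦ y² + y`. -/
def VF (F : Type*) [Field F] [Fintype F] [DecidableEq F] : Finset F :=
  univ.image (fun y => y ^ 2 + y)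

lemma mem_VF {c : F} : c ∈ VF F ↔ ∃ y : F, y ^ 2 + y = c := by
  simp [VF]

lemma two_zero : (2 : F) = 0 := CharTwo.two_eq_zero

lemma zero_mem_VF : (0 : F) ∈ VF F := mem_VF.2 ⟨0, by ring⟩

lemma VF_add_mem {a b : F} (ha : a ∈ VF F) (hb : b ∈ VF F) : a + b ∈ VF F := by
  obtain ⟨y, hy⟩ := mem_VF.1 ha
  obtain ⟨z, hz⟩ := mem_VF.1 hb
  refine mem_VF.2 ⟨y + z, ?_⟩
  have h2 : (2 : F) = 0 := two_zero
  linear_combination hy + hz + (y * z) * h2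

lemma AS_eq_iff {y z : F} : y ^ 2 + y = z ^ 2 + z ↔ y = z ∨ y = z + 1 := by
  have h2 : (2 : F) = 0 := two_zero
  constructor
  · intro h
    have h0 : (y + z) * ((y + z) + 1) = 0 := by
      linear_combination h + (z ^ 2 + z + y * z) * h2
    rcases mul_eq_zero.1 h0 with h1 | h1
    · left; linear_combination h1 - z * h2
    · right; linear_combination h1 - (z + 1) * h2
  · rintro (rfl | rfl)
    · rfl
    · linear_combination (z + 1) * h2

/-- each fiber of the Artin–Schreier map over a point of `VF` has exactly two elements -/
lemma fiber_card {c : F} (hc : c ∈ VF F) :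
    (univ.filter (fun y : F => y ^ 2 + y = c)).card = 2 := by
  obtain ⟨z, hz⟩ := mem_VF.1 hc
  have : (univ.filter (fun y : F => y ^ 2 + y = c)) = {z, z + 1} := by
    ext y
    simp only [mem_filter, mem_univ, true_and, mem_insert, mem_singleton]
    rw [← hz, AS_eq_iff]
  rw [this, card_insert_of_notMem, card_singleton]
  simp only [mem_singleton]
  intro hzz
  exact one_ne_zero (α := F) (by linear_combination -hzz)

lemma two_mul_VF_card : 2 * (VF F).card = Fintype.card F := by
  have h := Finset.card_eq_sum_card_fiberwise
    (f := fun y : F => y ^ 2 + y) (s := univ) (t := VF F)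
    (fun x _ => mem_VF.2 ⟨x, rfl⟩)
  rw [card_univ] at h
  have h3 : ∑ b ∈ VF F, (filter (fun a : F => (fun y : F => y ^ 2 + y) a = b) univ).card
      = ∑ _b ∈ VF F, 2 := Finset.sum_congr rfl (fun c hc => fiber_card hc)
  rw [h, h3, Finset.sum_const, smul_eq_mul, mul_comm]

lemma VF_compl_add_mem {a b : F} (ha : a ∉ VF F) (hb : b ∉ VF F) : a + b ∈ VF F := by
  -- the map v ↦ a + v sends VF into its complement, bijectively by cardinality
  have himg : (VF F).image (fun v => a + v) ⊆ univ \ VF F := by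
    intro x hx
    simp only [mem_image] at hx
    obtain ⟨v, hv, rfl⟩ := hx
    simp only [mem_sdiff, mem_univ, true_and]
    intro hav
    exact ha (by simpa [CharTwo.add_self_eq_zero, add_assoc] using VF_add_mem hav hv)
  have hinj : Set.InjOn (fun v => a + v) (VF F) := fun u _ v _ h => by
    simpa using h
  have hcard : ((VF F).image (fun v => a + v)).card = (VF F).card :=
    Finset.card_image_of_injOn hinj
  have hcompl : (univ \ VF F).card = (VF F).card := by
    rw [Finset.card_sdiff_of_subset (subset_univ _), card_univ, ← two_mul_VF_card]
    omega
  have heq : (VF F).image (fun v => a + v) = univ \ VF F :=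
    Finset.eq_of_subset_of_card_le himg (by rw [hcard, hcompl])
  have hbmem : b ∈ (VF F).image (fun v => a + v) := by
    rw [heq]; simp [hb]
  simp only [mem_image] at hbmem
  obtain ⟨v, hv, hbv⟩ := hbmem
  have hab : a + b = v := by
    have h0 := CharTwo.add_self_eq_zero a
    linear_combination h0 - hbv
  rwa [hab]

end SupersingularCount

namespace SupersingularCount

variable {F : Type*} [Field F] [Fintype F] [DecidableEq F] [CharP F 2]

/-- the quadratic-additive character attached to `VF` -/
def psi (c : F) : ℤ := if c ∈ VF F then 1 else -1

lemma psi_zero : psi (0 : F) = 1 := by simp [psi, zero_mem_VF]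

lemma psi_add (a b : F) : psi (a + b) = psi a * psi b := by
  by_cases ha : a ∈ VF F <;> by_cases hb : b ∈ VF F
  · simp [psi, ha, hb, VF_add_mem ha hb]
  · have : a + b ∉ VF F := by
      intro hab
      exact hb (by simpa [CharTwo.add_self_eq_zero, ← add_assoc] using VF_add_mem ha hab)
    simp [psi, ha, hb, this]
  · have : a + b ∉ VF F := by
      intro hab
      refine ha ?_
      have := VF_add_mem hab hb
      simpa [add_assoc, CharTwo.add_self_eq_zero] using this
    simp [psi, ha, hb, this]
  · simp [psi, ha, hb, VF_compl_add_mem ha hb]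

lemma psi_of_mem {c : F} (hc : c ∈ VF F) : psi c = 1 := by simp [psi, hc]

/-- the main character sum -/
def Scs (F : Type*) [Field F] [Fintype F] [DecidableEq F] : ℤ :=
  ∑ x : F, psi (x ^ 3)

/-- the set `T = {x : x³ ∈ V}` -/
def TF (F : Type*) [Field F] [Fintype F] [DecidableEq F] : Finset F :=
  univ.filter (fun x => x ^ 3 ∈ VF F)

lemma Scs_eq : Scs F = 2 * (TF F).card - Fintype.card F := by
  have h := Finset.sum_filter_add_sum_filter_not univ (fun x : F => x ^ 3 ∈ VF F)
    (fun x => psi (x ^ 3))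
  have h1 : ∑ x ∈ univ.filter (fun x : F => x ^ 3 ∈ VF F), psi (x ^ 3)
      = ((TF F).card : ℤ) := by
    rw [Finset.sum_congr rfl (fun x hx => psi_of_mem (mem_filter.1 hx).2)]
    simp [TF]
  have h2 : ∑ x ∈ univ.filter (fun x : F => ¬ x ^ 3 ∈ VF F), psi (x ^ 3)
      = -((univ.filter (fun x : F => ¬ x ^ 3 ∈ VF F)).card : ℤ) := by
    rw [Finset.sum_congr rfl (fun x hx =>
      show psi (x ^ 3) = -1 by simp [psi, (mem_filter.1 hx).2])]
    simp
  have h4 : univ.filter (fun x : F => ¬ x ^ 3 ∈ VF F) = univ \ TF F := by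
    rw [TF]; ext x; simp
  have hcards : (univ.filter (fun x : F => ¬ x ^ 3 ∈ VF F)).card
      = Fintype.card F - (TF F).card := by
    rw [h4, Finset.card_sdiff_of_subset (subset_univ _), card_univ]
  have hle : (TF F).card ≤ Fintype.card F := by
    rw [TF, ← card_univ]; exact Finset.card_filter_le _ _
  rw [Scs, ← h, h1, h2, hcards]
  push_cast [hle]
  ring

end SupersingularCount


namespace SupersingularCount

variable {F : Type*} [Field F] [Fintype F] [DecidableEq F] [CharP F 2]

/-- the multiplier field of `VF` is `F₂`. -/
lemma eq_one_of_mul_VF {c : F} (hc : c ≠ 0) (h : ∀ v ∈ VF F, c * v ∈ VF F) : c = 1 := by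
  classical
  -- the set of multipliers is a subfield
  have hinv : ∀ b : F, b ≠ 0 → (∀ v ∈ VF F, b * v ∈ VF F) → ∀ v ∈ VF F, b⁻¹ * v ∈ VF F := by
    intro b hb hbV v hv
    -- multiplication by b is an injection of VF into itself, hence a surjection
    have himg : (VF F).image (fun w => b * w) = VF F := by
      apply Finset.eq_of_subset_of_card_le
      · intro x hx
        simp only [mem_image] at hx
        obtain ⟨w, hw, rfl⟩ := hx
        exact hbV w hw
      · rw [Finset.card_image_of_injOn (fun u _ v _ huv => by
          exact mul_left_cancel₀ hb huv)]
    have : v ∈ (VF F).image (fun w => b * w) := by rw [himg]; exact hv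
    simp only [mem_image] at this
    obtain ⟨w, hw, hwv⟩ := this
    have : b⁻¹ * v = w := by rw [← hwv]; field_simp
    rwa [this]
  set D : Subfield F :=
    { carrier := {b : F | ∀ v ∈ VF F, b * v ∈ VF F}
      mul_mem' := by
        intro a b ha hb v hv
        rw [mul_assoc]
        exact ha _ (hb v hv)
      one_mem' := by intro v hv; simpa using hv
      add_mem' := by
        intro a b ha hb v hv
        rw [add_mul]
        exact VF_add_mem (ha v hv) (hb v hv)
      zero_mem' := by intro v hv; simpa using zero_mem_VF
      neg_mem' := by
        intro a ha v hv
        rw [neg_mul]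
        rw [CharTwo.neg_eq]
        exact ha v hv
      inv_mem' := by
        intro b hb
        by_cases hb0 : b = 0
        · subst hb0; simpa using (fun v hv => by simpa using zero_mem_VF)
        · exact hinv b hb0 hb } with hD
  have hcD : c ∈ D := h
  -- V is a D-submodule of F
  set M : Submodule D F :=
    { carrier := (VF F : Set F)
      add_mem' := fun ha hb => VF_add_mem ha hb
      zero_mem' := zero_mem_VF
      smul_mem' := by
        intro d v hv
        have : (d : F) * v ∈ VF F := d.2 v hv
        simpa [Subfield.smul_def] using this } with hM
  haveI : Fintype D := Fintype.ofFinite D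
  haveI : Fintype M := Fintype.ofFinite M
  have hcardF : Fintype.card F = Fintype.card D ^ Module.finrank D F :=
    Module.card_eq_pow_finrank
  have hcardM : Fintype.card M = Fintype.card D ^ Module.finrank D M :=
    Module.card_eq_pow_finrank
  have hMV : Fintype.card M = (VF F).card := by
    rw [← Fintype.card_coe (VF F)]
    exact Fintype.card_congr (Equiv.subtypeEquivRight (fun x => by
      constructor
      · intro hx; exact hx
      · intro hx; exact hx))
  -- 2 * |D|^r = |D|^s
  have key : 2 * Fintype.card D ^ Module.finrank D M
      = Fintype.card D ^ Module.finrank D F := by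
    rw [← hcardM, hMV, two_mul_VF_card, hcardF]
  have hD2 : 1 < Fintype.card D := Fintype.one_lt_card
  -- deduce |D| = 2
  have hpos : 0 < Fintype.card D ^ Module.finrank D M := pow_pos (by omega) _
  have hrs : Module.finrank D M < Module.finrank D F := by
    rw [← Nat.pow_lt_pow_iff_right hD2]
    omega
  have hDeq : Fintype.card D = 2 := by
    set r := Module.finrank D M
    set s := Module.finrank D F
    have hsplit : Fintype.card D ^ s = Fintype.card D ^ r * Fintype.card D ^ (s - r) := by
      rw [← pow_add]
      congr 1
      omega
    have h2 : Fintype.card D ^ (s - r) = 2 := by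
      rw [hsplit] at key
      have hx : 0 < Fintype.card D ^ r := pow_pos (by omega) _
      exact (Nat.eq_of_mul_eq_mul_left hx (by linarith [key])).symm
    have hle : Fintype.card D ≤ Fintype.card D ^ (s - r) := by
      apply Nat.le_self_pow (by omega)
    omega
  -- conclude `c = 1`
  by_contra hc1
  have h0 : (⟨c, hcD⟩ : D) ≠ 0 := fun hh => hc (congrArg Subtype.val hh)
  have h1 : (⟨c, hcD⟩ : D) ≠ 1 := fun hh => hc1 (congrArg Subtype.val hh)
  have h01 : (0 : D) ≠ 1 := zero_ne_one
  have hc3 : ({(0 : D), 1, ⟨c, hcD⟩} : Finset D).card = 3 := by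
    rw [Finset.card_insert_of_notMem (by simp [h01, h0.symm]),
      Finset.card_insert_of_notMem (by simp [h1.symm]), Finset.card_singleton]
  have hcle := Finset.card_le_univ ({(0 : D), 1, ⟨c, hcD⟩} : Finset D)
  omega


end SupersingularCount


namespace SupersingularCount

variable {F : Type*} [Field F] [Fintype F] [DecidableEq F] [CharP F 2]

lemma sum_psi_AS (c : F) :
    ∑ t : F, psi (c * (t ^ 2 + t)) = 2 * ∑ v ∈ VF F, psi (c * v) := by
  rw [← Finset.sum_fiberwise_of_maps_to (g := fun t : F => t ^ 2 + t) (t := VF F)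
    (fun x _ => mem_VF.2 ⟨x, rfl⟩) (fun t => psi (c * (t ^ 2 + t)))]
  rw [Finset.mul_sum]
  refine Finset.sum_congr rfl (fun v hv => ?_)
  have : ∀ t ∈ univ.filter (fun t : F => t ^ 2 + t = v), psi (c * (t ^ 2 + t)) = psi (c * v) :=
    fun t ht => by rw [(mem_filter.1 ht).2]
  rw [Finset.sum_congr rfl this, Finset.sum_const, fiber_card hv]
  push_cast
  ring

lemma sum_psi_mul_eq_zero {c : F} (h : ∃ v₀ ∈ VF F, c * v₀ ∉ VF F) :
    ∑ v ∈ VF F, psi (c * v) = 0 := by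
  obtain ⟨v₀, hv₀, hcv₀⟩ := h
  have hshift : ∑ v ∈ VF F, psi (c * v) = ∑ v ∈ VF F, psi (c * (v₀ + v)) := by
    refine Finset.sum_nbij' (fun v => v₀ + v) (fun v => v₀ + v) ?_ ?_ ?_ ?_ ?_
    · intro a ha; exact VF_add_mem hv₀ ha
    · intro a ha; exact VF_add_mem hv₀ ha
    · intro a _; show v₀ + (v₀ + a) = a
      rw [← add_assoc, CharTwo.add_self_eq_zero, zero_add]
    · intro a _; show v₀ + (v₀ + a) = a
      rw [← add_assoc, CharTwo.add_self_eq_zero, zero_add]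
    · intro a ha
      show psi (c * a) = psi (c * (v₀ + (v₀ + a)))
      rw [← add_assoc, CharTwo.add_self_eq_zero, zero_add]
  have hpsiv₀ : psi (c * v₀) = -1 := by simp [psi, hcv₀]
  have : ∑ v ∈ VF F, psi (c * (v₀ + v)) = - ∑ v ∈ VF F, psi (c * v) := by
    rw [← Finset.sum_neg_distrib]
    refine Finset.sum_congr rfl (fun v hv => ?_)
    rw [mul_add, psi_add, hpsiv₀]
    ring
  have hfin := hshift.trans this
  omega
  

lemma cube_identity (x u : F) : x ^ 3 + (x + u) ^ 3 = u * x ^ 2 + u ^ 2 * x + u ^ 3 := by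
  have h2 : (2 : F) = 0 := two_zero
  linear_combination (x ^ 3 + x ^ 2 * u + x * u ^ 2) * h2

lemma Scs_sq : Scs F * Scs F =
    (Fintype.card F : ℤ) *
      (1 + psi (1 : F) * ((univ.filter (fun u : F => u ^ 3 = 1)).card : ℤ)) := by
  have step1 : Scs F * Scs F = ∑ x : F, ∑ u : F, psi (u * x ^ 2 + u ^ 2 * x + u ^ 3) := by
    rw [Scs, Finset.sum_mul_sum]
    refine Finset.sum_congr rfl (fun x _ => ?_)
    calc ∑ z : F, psi (x ^ 3) * psi (z ^ 3)
        = ∑ z : F, psi (x ^ 3 + z ^ 3) :=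
          Finset.sum_congr rfl (fun z _ => (psi_add _ _).symm)
      _ = ∑ u : F, psi (x ^ 3 + (x + u) ^ 3) :=
          (Fintype.sum_equiv (Equiv.addLeft x) _ _ (fun u => rfl)).symm
      _ = ∑ u : F, psi (u * x ^ 2 + u ^ 2 * x + u ^ 3) :=
          Finset.sum_congr rfl (fun u _ => by rw [cube_identity])
  have hterm : ∀ u : F, u ≠ 0 → ∑ x : F, psi (u * x ^ 2 + u ^ 2 * x + u ^ 3)
      = if u ^ 3 = 1 then (Fintype.card F : ℤ) * psi (1 : F) else 0 := by
    intro u hu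
    have hreindex : ∑ x : F, psi (u * x ^ 2 + u ^ 2 * x + u ^ 3)
        = ∑ t : F, psi (u ^ 3 * (t ^ 2 + t) + u ^ 3) := by
      refine (Fintype.sum_equiv (Equiv.mulLeft₀ u hu) _ _ (fun t => ?_)).symm
      show psi (u ^ 3 * (t ^ 2 + t) + u ^ 3) = psi (u * (u * t) ^ 2 + u ^ 2 * (u * t) + u ^ 3)
      congr 1
      ring
    rw [hreindex,
      Finset.sum_congr rfl (fun t (_ : t ∈ univ) => psi_add (u ^ 3 * (t ^ 2 + t)) (u ^ 3)),
      ← Finset.sum_mul, sum_psi_AS]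
    by_cases hcube : u ^ 3 = 1
    · rw [hcube, if_pos rfl]
      have hsum1 : ∑ v ∈ VF F, psi ((1 : F) * v) = ((VF F).card : ℤ) := by
        rw [Finset.sum_congr rfl (fun v hv => by rw [one_mul, psi_of_mem hv])]
        simp
      rw [hsum1]
      have h2V := two_mul_VF_card (F := F)
      have : ((Fintype.card F : ℕ) : ℤ) = 2 * ((VF F).card : ℤ) := by
        rw [← h2V]; push_cast; ring
      rw [this]
    · rw [if_neg hcube]
      have hex : ∃ v₀ ∈ VF F, u ^ 3 * v₀ ∉ VF F := by
        by_contra hall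
        push_neg at hall
        exact hcube (eq_one_of_mul_VF (pow_ne_zero 3 hu) hall)
      rw [sum_psi_mul_eq_zero hex]
      ring
  have hfilter : (univ.erase (0 : F)).filter (fun u => u ^ 3 = 1)
      = univ.filter (fun u : F => u ^ 3 = 1) := by
    ext u
    by_cases h0 : u = 0
    · subst h0
      simp [zero_pow]
    · simp [h0]
  calc Scs F * Scs F
      = ∑ u : F, ∑ x : F, psi (u * x ^ 2 + u ^ 2 * x + u ^ 3) := by
        rw [step1, Finset.sum_comm]
    _ = (∑ x : F, psi ((0 : F) * x ^ 2 + (0 : F) ^ 2 * x + (0 : F) ^ 3))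
        + ∑ u ∈ univ.erase 0, ∑ x : F, psi (u * x ^ 2 + u ^ 2 * x + u ^ 3) := by
        exact (Finset.add_sum_erase univ
          (fun u => ∑ x : F, psi (u * x ^ 2 + u ^ 2 * x + u ^ 3)) (mem_univ (0 : F))).symm
    _ = (Fintype.card F : ℤ)
        + ∑ u ∈ univ.erase (0 : F),
            (if u ^ 3 = 1 then (Fintype.card F : ℤ) * psi (1 : F) else 0) := by
        congr 1
        · have hz : ∀ x : F, psi ((0 : F) * x ^ 2 + (0 : F) ^ 2 * x + (0 : F) ^ 3) = 1 :=
            fun x => by norm_num [psi_zero]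
          rw [Finset.sum_congr rfl fun x _ => hz x, Finset.sum_const, card_univ,
            nsmul_eq_mul, mul_one]
        · refine Finset.sum_congr rfl fun u hu => hterm u ?_
          exact (mem_erase.1 hu).1
    _ = (Fintype.card F : ℤ)
        + (Fintype.card F : ℤ) * psi (1 : F) * ((univ.filter (fun u : F => u ^ 3 = 1)).card : ℤ) := by
        have hall : ∑ u ∈ univ.erase (0 : F),
              (if u ^ 3 = 1 then (Fintype.card F : ℤ) * psi (1 : F) else 0)
            = ∑ u : F, (if u ^ 3 = 1 then (Fintype.card F : ℤ) * psi (1 : F) else 0) := by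
          rw [← Finset.add_sum_erase univ
            (fun u : F => if u ^ 3 = 1 then (Fintype.card F : ℤ) * psi (1 : F) else 0)
            (mem_univ (0 : F))]
          simp [zero_pow]
        rw [hall, ← Finset.sum_filter, Finset.sum_const, nsmul_eq_mul]
        ring
    _ = (Fintype.card F : ℤ)
        * (1 + psi (1 : F) * ((univ.filter (fun u : F => u ^ 3 = 1)).card : ℤ)) := by ring


end SupersingularCount


namespace SupersingularCount

variable {F : Type*} [Field F] [Fintype F] [DecidableEq F] [CharP F 2]

section Omega

variable {ω : F} (hω : ω ^ 2 + ω + 1 = 0)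
include hω

lemma omega_cube : ω ^ 3 = 1 := by linear_combination (ω - 1) * hω

lemma omega_ne_zero : ω ≠ 0 := by
  rintro rfl
  rw [zero_pow (by norm_num), zero_add, zero_add] at hω
  exact one_ne_zero hω

lemma omega_ne_one : ω ≠ 1 := by
  rintro rfl
  have h2 : (2 : F) = 0 := two_zero
  have : (1 : F) = 0 := by linear_combination hω - h2
  exact one_ne_zero this

lemma one_mem_VF_of_omega : (1 : F) ∈ VF F := by
  refine mem_VF.2 ⟨ω, ?_⟩
  have h2 : (2 : F) = 0 := two_zero
  linear_combination hω - h2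

lemma cube_roots_eq : univ.filter (fun u : F => u ^ 3 = 1) = {1, ω, ω ^ 2} := by
  ext u
  simp only [mem_filter, mem_univ, true_and, mem_insert, mem_singleton]
  constructor
  · intro h
    have hfac : (u - 1) * (u - ω) * (u - ω ^ 2) = 0 := by
      linear_combination h + ((u - 1) * (ω - 1 - u)) * hω
    rcases mul_eq_zero.1 hfac with h1 | h1
    · rcases mul_eq_zero.1 h1 with h2 | h2
      · exact Or.inl (by linear_combination h2)
      · exact Or.inr (Or.inl (by linear_combination h2))
    · exact Or.inr (Or.inr (by linear_combination h1))
  · rintro (rfl | rfl | rfl)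
    · exact one_pow 3
    · exact omega_cube hω
    · rw [← pow_mul]
      have : ω ^ (2 * 3) = (ω ^ 3) ^ 2 := by rw [← pow_mul, mul_comm]
      rw [this, omega_cube hω, one_pow]

lemma card_cube_roots : (univ.filter (fun u : F => u ^ 3 = 1)).card = 3 := by
  rw [cube_roots_eq hω]
  have h1 : ω ≠ 1 := omega_ne_one hω
  have h0 : ω ≠ 0 := omega_ne_zero hω
  have h21 : ω ^ 2 ≠ 1 := by
    intro h
    have h3 := omega_cube hω
    have : ω = 1 := by
      calc ω = ω * ω ^ 2 := by rw [h, mul_one]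
        _ = ω ^ 3 := by ring
        _ = 1 := h3
    exact h1 this
  have h2ω : ω ≠ ω ^ 2 := by
    intro h
    have : ω * (ω - 1) = 0 := by linear_combination -h
    rcases mul_eq_zero.1 this with h' | h'
    · exact h0 h'
    · exact h1 (by linear_combination h')
  rw [card_insert_of_notMem (by simp [Ne.symm h1, Ne.symm h21]),
    card_insert_of_notMem (by simp [h2ω]), card_singleton]

end Omega


section Omega2
variable {ω : F} (hω : ω ^ 2 + ω + 1 = 0)
include hω

lemma filter_cube_card {x₀ : F} (hx₀ : x₀ ≠ 0) :
    (univ.filter (fun x : F => x ^ 3 = x₀ ^ 3)).card = 3 := by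
  have himg : univ.filter (fun x : F => x ^ 3 = x₀ ^ 3)
      = (univ.filter (fun u : F => u ^ 3 = 1)).image (fun u => x₀ * u) := by
    ext x
    simp only [mem_filter, mem_univ, true_and, mem_image]
    constructor
    · intro h
      refine ⟨x₀⁻¹ * x, ?_, ?_⟩
      · field_simp
        exact h
      · field_simp
    · rintro ⟨u, hu, rfl⟩
      rw [mul_pow, hu, mul_one]
  rw [himg, Finset.card_image_of_injOn
    (fun u _ v _ huv => mul_left_cancel₀ hx₀ huv), card_cube_roots hω]

lemma TF_card_mod (hcard3 : ∀ x₀ : F, x₀ ≠ 0 →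
    (univ.filter (fun x : F => x ^ 3 = x₀ ^ 3)).card = 3) :
    ∃ t : ℕ, (TF F).card = 1 + 3 * t := by
  have h0T : (0 : F) ∈ TF F := by
    rw [TF]
    simp only [mem_filter, mem_univ, true_and]
    rw [zero_pow (by norm_num)]
    exact zero_mem_VF
  have hcard : (TF F).card = 1 + ((TF F).erase 0).card := by
    rw [Finset.card_erase_of_mem h0T]
    have : 0 < (TF F).card := Finset.card_pos.2 ⟨0, h0T⟩
    omega
  refine ⟨(((TF F).erase 0).image (fun x => x ^ 3)).card, ?_⟩
  rw [hcard]
  congr 1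
  have hfib := Finset.card_eq_sum_card_fiberwise
    (f := fun x : F => x ^ 3) (s := (TF F).erase 0)
    (t := ((TF F).erase 0).image (fun x => x ^ 3))
    (fun x hx => Finset.mem_image_of_mem _ hx)
  rw [hfib]
  have hstep : ∀ c ∈ ((TF F).erase 0).image (fun x : F => x ^ 3),
      (((TF F).erase 0).filter (fun x => x ^ 3 = c)).card = 3 := by
    intro c hc
    simp only [mem_image] at hc
    obtain ⟨x₀, hx₀mem, rfl⟩ := hc
    have hx₀ne : x₀ ≠ 0 := (mem_erase.1 hx₀mem).1
    have hx₀V : x₀ ^ 3 ∈ VF F := by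
      have := (mem_erase.1 hx₀mem).2
      rw [TF] at this
      exact (mem_filter.1 this).2
    have : ((TF F).erase 0).filter (fun x => x ^ 3 = x₀ ^ 3)
        = univ.filter (fun x : F => x ^ 3 = x₀ ^ 3) := by
      ext x
      simp only [mem_filter, mem_univ, true_and, mem_erase]
      constructor
      · rintro ⟨_, h⟩; exact h
      · intro h
        refine ⟨⟨?_, ?_⟩, h⟩
        · rintro rfl
          rw [zero_pow (by norm_num)] at h
          exact hx₀ne (pow_eq_zero_iff (by norm_num) |>.1 h.symm)
        · rw [TF]
          simp only [mem_filter, mem_univ, true_and]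
          rw [h]
          exact hx₀V
    rw [this]
    exact hcard3 x₀ hx₀ne
  rw [Finset.sum_congr rfl hstep, Finset.sum_const, smul_eq_mul, mul_comm]

end Omega2

/-- existence of a primitive cube root of unity when `3 ∣ q - 1` -/
lemma exists_omega (h3 : 3 ∣ Fintype.card F - 1) : ∃ ω : F, ω ^ 2 + ω + 1 = 0 := by
  have h3' : 3 ∣ Fintype.card Fˣ := by
    rw [Fintype.card_units]
    exact h3
  obtain ⟨g, hg⟩ := exists_prime_orderOf_dvd_card 3 h3'
  have hg3 : g ^ 3 = 1 := by
    rw [← hg]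
    exact pow_orderOf_eq_one g
  have hgne : g ≠ 1 := by
    intro h
    rw [h, orderOf_one] at hg
    norm_num at hg
  refine ⟨(g : F), ?_⟩
  have hcube : (g : F) ^ 3 = 1 := by
    rw [← Units.val_pow_eq_pow_val, hg3, Units.val_one]
  have hne : (g : F) ≠ 1 := by
    intro h
    exact hgne (Units.ext h)
  have hfac : ((g : F) - 1) * ((g : F) ^ 2 + (g : F) + 1) = 0 := by
    linear_combination hcube
  rcases mul_eq_zero.1 hfac with h | h
  · exact absurd (by linear_combination h) hne
  · exact h

/-- no primitive cube root of unity when `3 ∤ q - 1` -/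
lemma no_omega (h3 : ¬ 3 ∣ Fintype.card F - 1) : ∀ x : F, x ^ 2 + x + 1 ≠ 0 := by
  intro x hx
  have hx0 : x ≠ 0 := omega_ne_zero hx
  have hx1 : x ≠ 1 := omega_ne_one hx
  set u : Fˣ := Units.mk0 x hx0 with hu
  have hu3 : u ^ 3 = 1 := by
    ext
    rw [Units.val_pow_eq_pow_val]
    show x ^ 3 = 1
    exact omega_cube hx
  have hune : u ≠ 1 := by
    intro h
    apply hx1
    have := congrArg Units.val h
    simpa [hu] using this
  have hord : orderOf u = 3 := by
    have hdvd : orderOf u ∣ 3 := orderOf_dvd_of_pow_eq_one hu3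
    rcases (Nat.prime_three.eq_one_or_self_of_dvd _ hdvd) with h | h
    · exact absurd (orderOf_eq_one_iff.1 h) hune
    · exact h
  apply h3
  rw [← Fintype.card_units (α := F), ← hord]
  exact orderOf_dvd_card

lemma one_not_mem_VF (h3 : ¬ 3 ∣ Fintype.card F - 1) : (1 : F) ∉ VF F := by
  intro h
  obtain ⟨y, hy⟩ := mem_VF.1 h
  have h2 : (2 : F) = 0 := two_zero
  exact no_omega h3 y (by linear_combination hy + h2)

lemma card_cube_roots_one (h3 : ¬ 3 ∣ Fintype.card F - 1) :
    (univ.filter (fun u : F => u ^ 3 = 1)).card = 1 := by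
  have : univ.filter (fun u : F => u ^ 3 = 1) = {1} := by
    ext u
    simp only [mem_filter, mem_univ, true_and, mem_singleton]
    constructor
    · intro h
      have hfac : (u - 1) * (u ^ 2 + u + 1) = 0 := by linear_combination h
      rcases mul_eq_zero.1 hfac with h' | h'
      · linear_combination h'
      · exact absurd h' (no_omega h3 u)
    · rintro rfl; exact one_pow 3
  rw [this, card_singleton]



end SupersingularCount


namespace SupersingularCount

lemma pow2_mod3 (m : ℕ) : 2 ^ m % 3 = if Even m then 1 else 2 := by
  induction m with
  | zero => simp
  | succ n ih =>
    rw [pow_succ, Nat.mul_mod, ih]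
    by_cases h : Even n <;> simp [h, Nat.even_add_one]


variable {F : Type*} [Field F] [Fintype F] [DecidableEq F] [CharP F 2]

lemma Scs_odd (m : ℕ) (hm : Odd m) (hcard : Fintype.card F = 2 ^ m) : Scs F = 0 := by
  have h3 : ¬ (3 : ℕ) ∣ Fintype.card F - 1 := by
    rw [hcard]
    intro hdvd
    have hmod := pow2_mod3 m
    rw [if_neg (Nat.not_even_iff_odd.2 hm)] at hmod
    have h1 : 1 ≤ 2 ^ m := Nat.one_le_two_pow
    omega
  have hsq := Scs_sq (F := F)
  rw [card_cube_roots_one h3] at hsq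
  have hpsi1 : psi (1 : F) = -1 := by simp [psi, one_not_mem_VF h3]
  rw [hpsi1] at hsq
  norm_num at hsq
  exact hsq

lemma Scs_even (k : ℕ) (hcard : Fintype.card F = 2 ^ (2 * k)) :
    Scs F = -2 * (-2 : ℤ) ^ k := by
  have h3 : (3 : ℕ) ∣ Fintype.card F - 1 := by
    rw [hcard]
    have hmod := pow2_mod3 (2 * k)
    rw [if_pos (even_two_mul k)] at hmod
    have h1 : 1 ≤ 2 ^ (2 * k) := Nat.one_le_two_pow
    omega
  obtain ⟨ω, hω⟩ := exists_omega h3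
  have hsq := Scs_sq (F := F)
  rw [card_cube_roots hω, psi_of_mem (one_mem_VF_of_omega hω), hcard] at hsq
  have ha : Scs F * Scs F = (-2 * (-2 : ℤ) ^ k) * (-2 * (-2 : ℤ) ^ k) := by
    rw [hsq]
    have h4 : (-2 * (-2 : ℤ) ^ k) * (-2 * (-2 : ℤ) ^ k) = 4 * ((-2 : ℤ) * (-2)) ^ k := by
      rw [mul_pow]; ring
    rw [h4]
    push_cast
    rw [pow_mul]
    norm_num
    ring
  rcases mul_self_eq_mul_self_iff.1 ha with h | h
  · exact h
  · exfalso
    obtain ⟨t, ht⟩ := TF_card_mod hω (fun x₀ hx₀ => filter_cube_card hω hx₀)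
    have hScs := Scs_eq (F := F)
    rw [ht, hcard] at hScs
    rw [hScs] at h
    -- h : 2 * (1 + 3t) - 2^(2k) = -(-2 * (-2)^k)
    obtain ⟨j, hj⟩ : (3 : ℤ) ∣ (-2) ^ k - 1 := by
      have hh := sub_dvd_pow_sub_pow (-2 : ℤ) 1 k
      norm_num at hh
      exact hh
    have hPk : ((-2 : ℤ) ^ k) = 1 + 3 * j := by linarith [hj]
    have h2k : ((2 : ℤ)) ^ (2 * k) = (1 + 3 * j) * (1 + 3 * j) := by
      rw [← hPk, ← mul_pow, pow_mul]
      norm_num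
    push_cast at h
    rw [h2k, hPk] at h
    have hfin : (6 : ℤ) * t - 9 * (j * j) - 12 * j - 1 = 0 := by linear_combination h
    obtain ⟨A, hA⟩ : ∃ A : ℤ, j * j = A := ⟨_, rfl⟩
    rw [hA] at hfin
    omega


end SupersingularCount


namespace SupersingularCount

variable {F : Type*} [Field F] [Fintype F] [DecidableEq F] [CharP F 2]

lemma affine_card :
    Fintype.card {p : F × F // p.2 ^ 2 + p.2 = p.1 ^ 3} = 2 * (TF F).card := by
  have e : {p : F × F // p.2 ^ 2 + p.2 = p.1 ^ 3} ≃ (x : F) × {y : F // y ^ 2 + y = x ^ 3} :=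
    Equiv.subtypeProdEquivSigmaSubtype (fun x y => y ^ 2 + y = x ^ 3)
  rw [Fintype.card_congr e, Fintype.card_sigma]
  have hx : ∀ x : F, Fintype.card {y : F // y ^ 2 + y = x ^ 3}
      = if x ^ 3 ∈ VF F then 2 else 0 := by
    intro x
    rw [Fintype.card_subtype]
    by_cases hx3 : x ^ 3 ∈ VF F
    · rw [if_pos hx3]; exact fiber_card hx3
    · rw [if_neg hx3, Finset.card_eq_zero]
      ext y
      simp only [mem_filter, mem_univ, true_and, Finset.notMem_empty, iff_false]
      intro hy
      exact hx3 (mem_VF.2 ⟨y, hy⟩)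
  rw [Finset.sum_congr rfl (fun x _ => hx x), ← Finset.sum_filter, Finset.sum_const,
    smul_eq_mul, mul_comm]
  rfl

/-- the points of an affine Weierstrass curve are `∞` plus the nonsingular pairs -/
def pointEquiv {R : Type*} [CommRing R] (W : WeierstrassCurve.Affine R) :
    W.Point ≃ Option {p : R × R // W.Nonsingular p.1 p.2} where
  toFun P := match P with
    | .zero => none
    | @WeierstrassCurve.Affine.Point.some _ _ _ x y h => some ⟨(x, y), h⟩
  invFun o := match o with
    | none => .zero
    | some ⟨(x, y), h⟩ => .some x y h
  left_inv P := by cases P <;> rfl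
  right_inv o := by rcases o with _ | ⟨⟨x, y⟩, h⟩ <;> rfl

lemma nonsing_iff (x y : F) :
    (WeierstrassCurve.toAffine
      { a₁ := 0, a₂ := 0, a₃ := 1, a₄ := 0, a₆ := 0 : WeierstrassCurve F }).Nonsingular x y
      ↔ y ^ 2 + y = x ^ 3 := by
  rw [WeierstrassCurve.Affine.nonsingular_iff, WeierstrassCurve.Affine.equation_iff]
  have e1 : (WeierstrassCurve.toAffine
      { a₁ := 0, a₂ := 0, a₃ := 1, a₄ := 0, a₆ := 0 : WeierstrassCurve F }).a₁ = 0 := rfl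
  have e2 : (WeierstrassCurve.toAffine
      { a₁ := 0, a₂ := 0, a₃ := 1, a₄ := 0, a₆ := 0 : WeierstrassCurve F }).a₂ = 0 := rfl
  have e3 : (WeierstrassCurve.toAffine
      { a₁ := 0, a₂ := 0, a₃ := 1, a₄ := 0, a₆ := 0 : WeierstrassCurve F }).a₃ = 1 := rfl
  have e4 : (WeierstrassCurve.toAffine
      { a₁ := 0, a₂ := 0, a₃ := 1, a₄ := 0, a₆ := 0 : WeierstrassCurve F }).a₄ = 0 := rfl
  have e5 : (WeierstrassCurve.toAffine
      { a₁ := 0, a₂ := 0, a₃ := 1, a₄ := 0, a₆ := 0 : WeierstrassCurve F }).a₆ = 0 := rfl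
  rw [e1, e2, e3, e4, e5]
  constructor
  · rintro ⟨h, -⟩
    linear_combination h
  · intro h
    constructor
    · linear_combination h
    · right
      intro hy
      have h2 : (2 : F) = 0 := two_zero
      exact one_ne_zero (α := F) (by linear_combination hy - y * h2)

lemma point_card :
    Nat.card (WeierstrassCurve.toAffine
      { a₁ := 0, a₂ := 0, a₃ := 1, a₄ := 0, a₆ := 0 : WeierstrassCurve F }).Point
      = 1 + 2 * (TF F).card := by
  rw [Nat.card_congr (pointEquiv _),
    Nat.card_congr (Equiv.optionCongr (Equiv.subtypeEquivRight
      (fun p : F × F => nonsing_iff p.1 p.2))),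
    Nat.card_eq_fintype_card, Fintype.card_option, affine_card]
  omega


end SupersingularCount


open WeierstrassCurve

open SupersingularCount in
/-- The elliptic curve `𝓔 : y² + y = x³` over `F₂` satisfies
`#𝓔(F_{2^m}) = 2^m + 1 − (√2 i)^m − (−√2 i)^m` for every positive integer `m`
(points counted including the point at infinity). In particular, for `m` even this number is
`2^m + 1 − 2(−2)^{m/2}`, and for `m` odd it is `2^m + 1`. -/
theorem point_count_supersingular_curve (m : ℕ) (hm : 0 < m)
    (W : WeierstrassCurve (GaloisField 2 m))
    (hW : W = { a₁ := 0, a₂ := 0, a₃ := 1, a₄ := 0, a₆ := 0 }) :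
    ((Nat.card W.toAffine.Point : ℂ) =
      2 ^ m + 1 - (Real.sqrt 2 * Complex.I) ^ m - (-(Real.sqrt 2 * Complex.I)) ^ m) ∧
    (Even m → (Nat.card W.toAffine.Point : ℤ) = 2 ^ m + 1 - 2 * (-2 : ℤ) ^ (m / 2)) ∧
    (Odd m → Nat.card W.toAffine.Point = 2 ^ m + 1) := by
  subst hW
  letI : Fintype (GaloisField 2 m) := Fintype.ofFinite _
  letI : DecidableEq (GaloisField 2 m) := Classical.decEq _
  set F := GaloisField 2 m with hF
  have hcard : Fintype.card F = 2 ^ m := by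
    rw [← Nat.card_eq_fintype_card]
    exact GaloisField.card 2 m hm.ne'
  have hN : Nat.card (WeierstrassCurve.toAffine
      { a₁ := 0, a₂ := 0, a₃ := 1, a₄ := 0, a₆ := 0 : WeierstrassCurve F }).Point
      = 1 + 2 * (TF F).card := point_card
  have hNZ : (Nat.card (WeierstrassCurve.toAffine
      { a₁ := 0, a₂ := 0, a₃ := 1, a₄ := 0, a₆ := 0 : WeierstrassCurve F }).Point : ℤ)
      = 1 + 2 ^ m + Scs F := by
    have hS := Scs_eq (F := F)
    rw [hcard] at hS
    push_cast at hS
    rw [hN]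
    push_cast
    linarith [hS]
  rcases Nat.even_or_odd m with hpar | hpar
  · -- even case
    obtain ⟨k, hk⟩ := hpar
    have hk2 : m = 2 * k := by omega
    have hSval : Scs F = -2 * (-2 : ℤ) ^ k := Scs_even k (by rw [hcard, hk2])
    have hNZ' : (Nat.card (WeierstrassCurve.toAffine
        { a₁ := 0, a₂ := 0, a₃ := 1, a₄ := 0, a₆ := 0 : WeierstrassCurve F }).Point : ℤ)
        = 2 ^ m + 1 - 2 * (-2 : ℤ) ^ k := by
      rw [hNZ, hSval]; ring
    have hdiv : m / 2 = k := by omega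
    refine ⟨?_, fun _ => by rw [hdiv]; exact hNZ', fun hodd => ?_⟩
    · -- complex statement
      have hz2 : ((Real.sqrt 2 : ℂ) * Complex.I) ^ 2 = -2 := by
        have : ((Real.sqrt 2 : ℂ)) ^ 2 = 2 := by
          rw [← Complex.ofReal_pow, Real.sq_sqrt (by norm_num : (2:ℝ) ≥ 0)]
          norm_num
        rw [mul_pow, this, Complex.I_sq]
        ring
      have hzm : ((Real.sqrt 2 : ℂ) * Complex.I) ^ m = (-2 : ℂ) ^ k := by
        rw [hk2, pow_mul, hz2]
      have hneg : (-(Real.sqrt 2 * Complex.I)) ^ m = ((Real.sqrt 2 : ℂ) * Complex.I) ^ m :=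
        Even.neg_pow ⟨k, hk⟩ _
      rw [hneg, hzm]
      have := hNZ'
      have hC := congrArg (Int.cast : ℤ → ℂ) this
      push_cast at hC
      rw [hC]
      ring
    · exact absurd hodd (Nat.not_odd_iff_even.2 ⟨k, hk⟩)
  · -- odd case
    have hSval : Scs F = 0 := Scs_odd m hpar hcard
    have hNZ' : (Nat.card (WeierstrassCurve.toAffine
        { a₁ := 0, a₂ := 0, a₃ := 1, a₄ := 0, a₆ := 0 : WeierstrassCurve F }).Point : ℤ)
        = 2 ^ m + 1 := by rw [hNZ, hSval]; ring
    have hNN : Nat.card (WeierstrassCurve.toAffine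
        { a₁ := 0, a₂ := 0, a₃ := 1, a₄ := 0, a₆ := 0 : WeierstrassCurve F }).Point
        = 2 ^ m + 1 := by exact_mod_cast hNZ'
    refine ⟨?_, fun heven => absurd heven (Nat.not_even_iff_odd.2 hpar), fun _ => hNN⟩
    have hneg : (-(Real.sqrt 2 * Complex.I)) ^ m = -((Real.sqrt 2 : ℂ) * Complex.I) ^ m :=
      Odd.neg_pow hpar _
    rw [hneg]
    have hC := congrArg (Int.cast : ℤ → ℂ) hNZ'
    push_cast at hC
    rw [hC]
    ring
end

section
/- Let q = 2^f with f odd, and let k₂ = F_{q²}. Then the number N₁ of elements y ∈ k₂ such that y + y² is a nonzero cube in k₂× equals (q² + 2q − 2)/3. -/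
open Finset Polynomial

namespace CardTraceCubeAux

variable {K : Type*} [Field K] [Fintype K] [DecidableEq K]

lemma card_pow_eq_le (n : ℕ) (hn : 0 < n) (c : K) :
    (univ.filter fun x : K => x ^ n = c).card ≤ n := by
  have hsub : (univ.filter fun x : K => x ^ n = c) ⊆ (nthRoots n c).toFinset := by
    intro x hx
    simp only [mem_filter, mem_univ, true_and] at hx
    simpa [Multiset.mem_toFinset, mem_nthRoots hn] using hx
  calc (univ.filter fun x : K => x ^ n = c).card
      ≤ (nthRoots n c).toFinset.card := card_le_card hsub
    _ ≤ Multiset.card (nthRoots n c) := Multiset.toFinset_card_le _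
    _ ≤ n := card_nthRoots n c

lemma card_fiber_const {α β : Type*} [DecidableEq β] (s : Finset α) (g : α → β) (m : ℕ)
    (h : ∀ b ∈ s.image g, (s.filter fun x => g x = b).card = m) :
    s.card = (s.image g).card * m := by
  rw [Finset.card_eq_sum_card_image g s, Finset.sum_congr rfl h, Finset.sum_const, smul_eq_mul]

lemma core {K : Type*} [Field K] [Fintype K] (f : ℕ) (hf : Odd f) [CharP K 2]
    (hcard : Fintype.card K = (2 ^ f) ^ 2) :
    (Nat.card {y : K // ∃ c : K, c ≠ 0 ∧ y + y ^ 2 = c ^ 3} : ℚ) =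
      ((2 ^ f : ℚ) ^ 2 + 2 * 2 ^ f - 2) / 3 := by
  classical
  set q : ℕ := 2 ^ f with hqdef
  have hf1 : 1 ≤ f := hf.pos
  have hq2 : 2 ≤ q := by
    calc 2 = 2 ^ 1 := (pow_one 2).symm
    _ ≤ 2 ^ f := Nat.pow_le_pow_right (by norm_num) hf1
  have hq0 : q ≠ 0 := by omega
  have hcardK : Fintype.card K = q ^ 2 := hcard
  have h2 : ∀ x : K, x + x = 0 := fun x => CharTwo.add_self_eq_zero x
  have hneg : ∀ x : K, -x = x := fun x => CharTwo.neg_eq x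
  have hfrob : ∀ x y : K, (x + y) ^ q = x ^ q + y ^ q := fun x y => add_pow_char_pow x y 2 f
  have hsq : ∀ x y : K, (x + y) ^ 2 = x ^ 2 + y ^ 2 := fun x y => add_pow_char x y 2
  have hqq : ∀ x : K, (x ^ q) ^ q = x := by
    intro x
    rw [← pow_mul, ← pow_two, hqdef, ← hcardK]
    exact FiniteField.pow_card x
  -- divisibility facts
  have h3 : 3 ∣ q + 1 := by
    have : ((q + 1 : ℕ) : ZMod 3) = 0 := by
      push_cast
      have h2' : (2 : ZMod 3) = -1 := by decide
      rw [hqdef]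
      push_cast
      rw [h2', hf.neg_one_pow]
      ring
    exact (ZMod.natCast_eq_zero_iff _ _).mp this
  have h3' : ¬ 3 ∣ q - 1 := by
    intro h
    omega
  -- the Artin-Schreier map φ and relative trace R
  set φ : K → K := fun y => y + y ^ 2 with hφ
  set R : K → K := fun x => x ^ q + x with hR
  set A : Finset K := univ.filter (fun a : K => a ^ q = a) with hA
  set A1 : Finset K := univ.filter (fun a : K => a ^ q = a ∧ a ≠ 0) with hA1
  set U : Finset K := univ.filter (fun u : K => u ^ (q + 1) = 1) with hU
  set SA : Finset K := A.image φ with hSA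
  set T : Finset K := univ.image φ with hT
  set U3 : Finset K := U.image (fun u => u ^ 3) with hU3
  have hmemA : ∀ a : K, a ∈ A ↔ a ^ q = a := by intro a; simp [hA]
  have hmemA1 : ∀ a : K, a ∈ A1 ↔ a ^ q = a ∧ a ≠ 0 := by intro a; simp [hA1]
  have hmemU : ∀ u : K, u ∈ U ↔ u ^ (q + 1) = 1 := by intro u; simp [hU]
  have hA0 : (0 : K) ∈ A := by rw [hmemA]; simp [zero_pow hq0]
  have hAone : (1 : K) ∈ A := by rw [hmemA]; simp
  -- φ fibers
  have hfib : ∀ y z : K, φ z = φ y ↔ z = y ∨ z = y + 1 := by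
    intro y z
    constructor
    · intro h
      have hz : (z - y) * (z + y + 1) = 0 := by
        have hid : φ z - φ y = (z - y) * (z + y + 1) := by simp only [hφ]; ring
        rw [h, sub_self] at hid; exact hid.symm
      rcases mul_eq_zero.mp hz with h1 | h1
      · left; exact sub_eq_zero.mp h1
      · right
        have h1' : z + (y + 1) = 0 := by rw [← add_assoc]; exact h1
        have := eq_neg_of_add_eq_zero_left h1'
        rw [hneg] at this; exact this
    · rintro (rfl | rfl)
      · rfl
      · simp only [hφ]
        linear_combination (y + 1) * h2 1
  have hpair : ∀ y : K, ({y, y + 1} : Finset K).card = 2 := by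
    intro y
    rw [card_insert_of_notMem (by simp), card_singleton]
  -- card T
  have hTcard : T.card * 2 = q ^ 2 := by
    have hfibs : ∀ b ∈ (univ : Finset K).image φ,
        ((univ : Finset K).filter fun x => φ x = b).card = 2 := by
      intro b hb
      obtain ⟨y, -, hy⟩ := mem_image.mp hb
      have : (univ : Finset K).filter (fun x => φ x = b) = {y, y + 1} := by
        ext z
        simp only [mem_filter, mem_univ, true_and, mem_insert, mem_singleton, ← hy, hfib]
      rw [this, hpair]
    have := card_fiber_const (univ : Finset K) φ 2 hfibs
    rw [card_univ, hcardK] at this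
    rw [hT]; omega
  -- a ∈ A, nonzero, gives a^(q-1) = 1
  have hApow : ∀ a : K, a ≠ 0 → a ^ q = a → a ^ (q - 1) = 1 := by
    intro a h0 ha
    have h' : a ^ (q - 1) * a = 1 * a := by
      rw [← pow_succ, Nat.sub_add_cancel (by omega), ha, one_mul]
    exact mul_right_cancel₀ h0 h'
  have hAcard_le : A.card ≤ q := by
    have hsub : A ⊆ insert (0 : K) (univ.filter fun x : K => x ^ (q - 1) = 1) := by
      intro a ha
      rw [hmemA] at ha
      by_cases h0 : a = 0
      · simp [h0]
      · exact mem_insert_of_mem (by simp [hApow a h0 ha])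
    calc A.card ≤ _ := card_le_card hsub
      _ ≤ (univ.filter fun x : K => x ^ (q - 1) = 1).card + 1 := card_insert_le _ _
      _ ≤ (q - 1) + 1 := by
          have := card_pow_eq_le (K := K) (q - 1) (by omega) 1
          omega
      _ = q := by omega
  have hRA : ∀ x : K, R x ∈ A := by
    intro x
    rw [hmemA]
    show (x ^ q + x) ^ q = x ^ q + x
    rw [hfrob, hqq, add_comm]
  have hRzeroA : ∀ a : K, a ∈ A → R a = 0 := by
    intro a ha
    rw [hmemA] at ha
    show a ^ q + a = 0
    rw [ha]; exact h2 a
  have hRzero_mem : ∀ x : K, R x = 0 → x ∈ A := by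
    intro x hx
    rw [hmemA]
    have : x ^ q = -x := eq_neg_of_add_eq_zero_left hx
    rw [hneg] at this; exact this
  have hRadd : ∀ x y : K, R (x + y) = R x + R y := by
    intro x y
    show (x + y) ^ q + (x + y) = (x ^ q + x) + (y ^ q + y)
    rw [hfrob]; ring
  have hRfiber : ∀ y : K, (univ.filter fun x : K => R x = R y) = A.image (fun a => y + a) := by
    intro y
    ext z
    simp only [mem_filter, mem_univ, true_and, mem_image]
    constructor
    · intro h
      refine ⟨z + y, ?_, ?_⟩
      · apply hRzero_mem
        rw [hRadd, h, h2]
      · rw [add_comm z y, ← add_assoc, h2, zero_add]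
    · rintro ⟨a, ha, rfl⟩
      rw [hRadd, hRzeroA a ha, add_zero]
  have hRcard : q ^ 2 = ((univ : Finset K).image R).card * A.card := by
    have hfibs : ∀ b ∈ (univ : Finset K).image R,
        ((univ : Finset K).filter fun x => R x = b).card = A.card := by
      intro b hb
      obtain ⟨y, -, hy⟩ := mem_image.mp hb
      rw [← hy, hRfiber y, card_image_of_injective _ (add_right_injective y)]
    have := card_fiber_const (univ : Finset K) R A.card hfibs
    rw [card_univ, hcardK] at this
    exact this
  have himR_sub : (univ : Finset K).image R ⊆ A := by
    intro b hb
    obtain ⟨y, -, hy⟩ := mem_image.mp hb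
    rw [← hy]; exact hRA y
  have hAcard : A.card = q := by
    have h1 : ((univ : Finset K).image R).card ≤ A.card := card_le_card himR_sub
    refine Nat.le_antisymm hAcard_le ?_
    nlinarith [hRcard, hAcard_le, h1]
  have himR : (univ : Finset K).image R = A := by
    apply eq_of_subset_of_card_le himR_sub
    rw [hAcard]
    have : q ^ 2 = ((univ : Finset K).image R).card * q := by rw [hRcard, hAcard]
    nlinarith [this]
  have hA1eq : A1 = A.erase 0 := by
    ext a
    rw [hmemA1, mem_erase, hmemA, and_comm]
  have hA1card : A1.card = q - 1 := by
    rw [hA1eq, card_erase_of_mem hA0, hAcard]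
  have hqm : (q - 1) * (q + 1) = q ^ 2 - 1 := by
    have h1 : 1 ≤ q := by omega
    have h2' : 1 ≤ q ^ 2 := by nlinarith
    zify [h1, h2']
    ring
  have hUne : ∀ u : K, u ∈ U → u ≠ 0 := by
    intro u hu h0
    rw [hmemU, h0, zero_pow (by omega)] at hu
    exact zero_ne_one hu
  have hUone : (1 : K) ∈ U := by rw [hmemU]; simp
  have hUmul : ∀ u v : K, u ∈ U → v ∈ U → u * v ∈ U := by
    intro u v hu hv
    rw [hmemU] at hu hv ⊢
    rw [mul_pow, hu, hv, one_mul]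
  have hUcard_le : U.card ≤ q + 1 := by
    have := card_pow_eq_le (K := K) (q + 1) (by omega) 1
    rw [hU]; exact this
  -- the power map x ↦ x^(q-1) maps nonzeroes onto U with fibers of size q-1
  set NZ : Finset K := univ.filter (fun x : K => x ≠ 0) with hNZ
  have hmemNZ : ∀ x : K, x ∈ NZ ↔ x ≠ 0 := by intro x; simp [hNZ]
  have hNZcard : NZ.card = q ^ 2 - 1 := by
    have : NZ = univ.erase 0 := by
      ext x; rw [hmemNZ, mem_erase]; simp
    rw [this, card_erase_of_mem (mem_univ 0), card_univ, hcardK]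
  have hpowq2 : ∀ x : K, x ^ (q ^ 2) = x := by
    intro x
    rw [pow_two, pow_mul]; exact hqq x
  have hgU : ∀ x : K, x ≠ 0 → x ^ (q - 1) ∈ U := by
    intro x hx
    rw [hmemU, ← pow_mul, hqm]
    have h' : x ^ (q ^ 2 - 1) * x = 1 * x := by
      rw [← pow_succ, Nat.sub_add_cancel (by nlinarith), hpowq2, one_mul]
    exact mul_right_cancel₀ hx h'
  have hgfib : ∀ y : K, y ≠ 0 →
      (NZ.filter fun x => x ^ (q - 1) = y ^ (q - 1)) = A1.image (fun a => y * a) := by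
    intro y hy
    ext x
    simp only [mem_filter, hmemNZ, mem_image]
    constructor
    · rintro ⟨hx0, hx⟩
      refine ⟨x * y⁻¹, ?_, ?_⟩
      · rw [hmemA1]
        have hxy0 : x * y⁻¹ ≠ 0 := by
          simp [hx0, inv_ne_zero hy]
        refine ⟨?_, hxy0⟩
        have hpow1 : (x * y⁻¹) ^ (q - 1) = 1 := by
          rw [mul_pow, inv_pow, hx, mul_inv_cancel₀ (pow_ne_zero _ hy)]
        have : (x * y⁻¹) ^ q = (x * y⁻¹) ^ (q - 1) * (x * y⁻¹) := by
          rw [← pow_succ, Nat.sub_add_cancel (by omega)]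
        rw [this, hpow1, one_mul]
      · field_simp
    · rintro ⟨a, ha, rfl⟩
      rw [hmemA1] at ha
      obtain ⟨haq, ha0⟩ := ha
      constructor
      · exact mul_ne_zero hy ha0
      · rw [mul_pow, hApow a ha0 haq, mul_one]
  have hUcard : U.card = q + 1 := by
    have hfibs : ∀ b ∈ NZ.image (fun x : K => x ^ (q - 1)),
        (NZ.filter fun x => x ^ (q - 1) = b).card = q - 1 := by
      intro b hb
      obtain ⟨y, hy, hyb⟩ := mem_image.mp hb
      rw [hmemNZ] at hy
      rw [← hyb, hgfib y hy,
        card_image_of_injective _ (mul_right_injective₀ hy), hA1card]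
    have hcnt := card_fiber_const NZ (fun x : K => x ^ (q - 1)) (q - 1) hfibs
    rw [hNZcard] at hcnt
    have hsubU : NZ.image (fun x : K => x ^ (q - 1)) ⊆ U := by
      intro b hb
      obtain ⟨y, hy, hyb⟩ := mem_image.mp hb
      rw [hmemNZ] at hy
      rw [← hyb]; exact hgU y hy
    have h1 : (NZ.image (fun x : K => x ^ (q - 1))).card ≤ U.card := card_le_card hsubU
    -- q^2 - 1 = img * (q-1),  img ≤ U.card ≤ q+1, (q+1)(q-1) = q^2-1
    have himg : (NZ.image (fun x : K => x ^ (q - 1))).card = q + 1 := by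
      apply Nat.eq_of_mul_eq_mul_right (show 0 < q - 1 by omega)
      rw [← hcnt, mul_comm (q + 1), hqm]
    omega
  -- a primitive cube root of unity
  haveI : Fact (Nat.Prime 3) := ⟨by norm_num⟩
  obtain ⟨ζu, hζu⟩ := exists_prime_orderOf_dvd_card (G := Kˣ) 3 (by
    rw [Fintype.card_units, hcardK]
    rw [← hqm]
    exact Dvd.dvd.mul_left h3 _)
  set ζ : K := (ζu : K) with hζ
  have hζ3 : ζ ^ 3 = 1 := by
    have h' : ζu ^ 3 = 1 := by rw [← hζu]; exact pow_orderOf_eq_one ζu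
    rw [hζ, ← Units.val_pow_eq_pow_val, h', Units.val_one]
  have hζne0 : ζ ≠ 0 := Units.ne_zero ζu
  have hζne1 : ζ ≠ 1 := by
    intro h
    have : ζu = 1 := Units.ext h
    rw [this, orderOf_one] at hζu
    omega
  have hζ2ne1 : ζ ^ 2 ≠ 1 := by
    intro h
    apply hζne1
    have h1 : (1 : K) = ζ := by rw [← hζ3, pow_succ, h, one_mul]
    exact h1.symm
  have hζζ2 : ζ ≠ ζ ^ 2 := by
    intro h
    apply hζne1
    have : ζ * 1 = ζ * ζ := by rw [mul_one, ← pow_two, ← h]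
    exact ((mul_left_cancel₀ hζne0 this)).symm
  have hcube1 : (univ.filter fun x : K => x ^ 3 = 1) = {1, ζ, ζ ^ 2} := by
    symm
    apply eq_of_subset_of_card_le
    · intro x hx
      simp only [mem_insert, mem_singleton] at hx
      simp only [mem_filter, mem_univ, true_and]
      rcases hx with rfl | rfl | rfl
      · exact one_pow 3
      · exact hζ3
      · rw [← pow_mul, show 2 * 3 = 3 * 2 by ring, pow_mul, hζ3, one_pow]
    · have hc3 : ({1, ζ, ζ ^ 2} : Finset K).card = 3 := by
        rw [card_insert_of_notMem (by simp [Ne.symm hζne1, Ne.symm hζ2ne1]),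
          card_insert_of_notMem (by simp [hζζ2]), card_singleton]
      rw [hc3]
      exact card_pow_eq_le 3 (by omega) 1
  have hcubefib : ∀ u w : K, u ≠ 0 → (w ^ 3 = u ^ 3 ↔ w = u ∨ w = ζ * u ∨ w = ζ ^ 2 * u) := by
    intro u w hu
    constructor
    · intro h
      have hwu : (w / u) ^ 3 = 1 := by
        rw [div_pow, h, div_self (pow_ne_zero _ hu)]
      have : w / u ∈ ({1, ζ, ζ ^ 2} : Finset K) := by
        rw [← hcube1]; simp [hwu]
      simp only [mem_insert, mem_singleton] at this
      rcases this with h' | h' | h'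
      · left
        rw [div_eq_one_iff_eq hu] at h'
        exact h'
      · right; left
        rw [div_eq_iff hu] at h'
        exact h'
      · right; right
        rw [div_eq_iff hu] at h'
        exact h'
    · rintro (rfl | rfl | rfl)
      · rfl
      · rw [mul_pow, hζ3, one_mul]
      · rw [mul_pow, ← pow_mul, show 2 * 3 = 3 * 2 by ring, pow_mul, hζ3, one_pow, one_mul]
  have hζU : ζ ∈ U := by
    rw [hmemU]
    obtain ⟨m, hm⟩ := h3
    rw [hm, pow_mul, hζ3, one_pow]
  have hU3sub : U3 ⊆ U := by
    intro v hv
    rw [hU3] at hv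
    obtain ⟨u, hu, rfl⟩ := mem_image.mp hv
    have h' : u * u * u ∈ U := hUmul _ _ (hUmul _ _ hu hu) hu
    have he : u ^ 3 = u * u * u := by ring
    rw [he]; exact h'
  have hU3card : U3.card * 3 = q + 1 := by
    have hfibs : ∀ b ∈ U.image (fun u : K => u ^ 3),
        (U.filter fun w => w ^ 3 = b).card = 3 := by
      intro b hb
      obtain ⟨u, hu, rfl⟩ := mem_image.mp hb
      have hu0 : u ≠ 0 := hUne u hu
      have : U.filter (fun w => w ^ 3 = u ^ 3) = {u, ζ * u, ζ ^ 2 * u} := by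
        ext w
        simp only [mem_filter, mem_insert, mem_singleton]
        constructor
        · rintro ⟨-, hw⟩
          exact (hcubefib u w hu0).mp hw
        · rintro (rfl | rfl | rfl)
          · exact ⟨hu, rfl⟩
          · exact ⟨hUmul _ _ hζU hu, by rw [mul_pow, hζ3, one_mul]⟩
          · have hζ2U : ζ ^ 2 ∈ U := by
              have := hUmul _ _ hζU hζU
              rwa [← pow_two] at this
            refine ⟨hUmul _ _ hζ2U hu, ?_⟩
            rw [mul_pow, ← pow_mul, show 2 * 3 = 3 * 2 by ring, pow_mul, hζ3, one_pow, one_mul]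
      rw [this]
      have h1 : u ≠ ζ * u := by
        intro h
        exact hζne1 (mul_right_cancel₀ hu0 (by rw [← h, one_mul])).symm
      have h2' : u ≠ ζ ^ 2 * u := by
        intro h
        exact hζ2ne1 (mul_right_cancel₀ hu0 (by rw [← h, one_mul])).symm
      have h3'' : ζ * u ≠ ζ ^ 2 * u := by
        intro h
        exact hζζ2 (mul_right_cancel₀ hu0 h)
      rw [card_insert_of_notMem (by simp [h1, h2']), card_insert_of_notMem (by simp [h3'']),
        card_singleton]
    have := card_fiber_const U (fun u : K => u ^ 3) 3 hfibs
    rw [hUcard] at this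
    rw [hU3]
    omega
  have hU3one : (1 : K) ∈ U3 := by
    rw [hU3]
    exact mem_image.mpr ⟨1, hUone, one_pow 3⟩
  -- A ∩ U = {1}
  have hAU : ∀ w : K, w ≠ 0 → w ^ q = w → w ^ (q + 1) = 1 → w = 1 := by
    intro w h0 hwA hwU
    have hw2 : w ^ 2 = 1 := by
      rw [← hwU, pow_succ w q, hwA, pow_two]
    have hfac : (w - 1) * (w + 1) = 0 := by linear_combination hw2
    rcases mul_eq_zero.mp hfac with h' | h'
    · exact sub_eq_zero.mp h'
    · have : w = -1 := eq_neg_of_add_eq_zero_left h'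
      rw [hneg] at this; exact this
  -- injectivity of (a, u) ↦ a * u on A1 × U
  have hinjAU : ∀ a ∈ A1, ∀ u ∈ U, ∀ a' ∈ A1, ∀ u' ∈ U, a * u = a' * u' → a = a' ∧ u = u' := by
    intro a ha u hu a' ha' u' hu' h
    rw [hmemA1] at ha ha'
    obtain ⟨haq, ha0⟩ := ha
    obtain ⟨haq', ha0'⟩ := ha'
    have hu0 : u ≠ 0 := hUne u hu
    have hu0' : u' ≠ 0 := hUne u' hu'
    rw [hmemU] at hu hu'
    have hkey : a * a'⁻¹ = u' * u⁻¹ := by field_simp; linear_combination h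
    have hw1 : a * a'⁻¹ = 1 := by
      apply hAU
      · exact mul_ne_zero ha0 (inv_ne_zero ha0')
      · rw [mul_pow, inv_pow, haq, haq']
      · rw [hkey, mul_pow, inv_pow, hu, hu', inv_one, mul_one]
    have haa : a = a' := by
      field_simp at hw1; exact hw1
    refine ⟨haa, ?_⟩
    rw [haa] at h
    exact mul_left_cancel₀ ha0' h
  -- decomposition of nonzero elements
  have hdecomp : ∀ c : K, c ≠ 0 → ∃ a ∈ A1, ∃ u ∈ U, c = a * u := by
    have hPsub : (A1 ×ˢ U).image (fun p : K × K => p.1 * p.2) ⊆ NZ := by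
      intro b hb
      obtain ⟨p, hp, rfl⟩ := mem_image.mp hb
      rw [mem_product] at hp
      rw [hmemNZ]
      exact mul_ne_zero (((hmemA1 p.1).mp hp.1).2) (hUne p.2 hp.2)
    have hPcard : ((A1 ×ˢ U).image (fun p : K × K => p.1 * p.2)).card = (q - 1) * (q + 1) := by
      rw [card_image_of_injOn, card_product, hA1card, hUcard]
      intro p hp p' hp' hpp
      simp only [coe_product, Set.mem_prod, mem_coe] at hp hp'
      obtain ⟨h1, h2'⟩ := hinjAU p.1 hp.1 p.2 hp.2 p'.1 hp'.1 p'.2 hp'.2 hpp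
      exact Prod.ext h1 h2'
    have hPeq : (A1 ×ˢ U).image (fun p : K × K => p.1 * p.2) = NZ :=
      eq_of_subset_of_card_le hPsub (by rw [hNZcard, hPcard, hqm])
    intro c hc
    have : c ∈ (A1 ×ˢ U).image (fun p : K × K => p.1 * p.2) := by
      rw [hPeq, hmemNZ]; exact hc
    obtain ⟨p, hp, hpc⟩ := mem_image.mp this
    rw [mem_product] at hp
    exact ⟨p.1, hp.1, p.2, hp.2, hpc.symm⟩
  -- cubing is a bijection on A1
  have hcubeAmem : ∀ a ∈ A1, a ^ 3 ∈ A1 := by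
    intro a ha
    rw [hmemA1] at ha ⊢
    obtain ⟨haq, ha0⟩ := ha
    exact ⟨by rw [← pow_right_comm, haq], pow_ne_zero _ ha0⟩
  have hcubeAinj : ∀ x ∈ A1, ∀ y ∈ A1, x ^ 3 = y ^ 3 → x = y := by
    intro x hx y hy h
    rw [hmemA1] at hx hy
    obtain ⟨hxq, hx0⟩ := hx
    obtain ⟨hyq, hy0⟩ := hy
    have hw3 : (x * y⁻¹) ^ 3 = 1 := by
      rw [mul_pow, inv_pow, h, mul_inv_cancel₀ (pow_ne_zero _ hy0)]
    have hwq : (x * y⁻¹) ^ (q - 1) = 1 := by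
      apply hApow _ (mul_ne_zero hx0 (inv_ne_zero hy0))
      rw [mul_pow, inv_pow, hxq, hyq]
    have hdvd : orderOf (x * y⁻¹) ∣ Nat.gcd 3 (q - 1) :=
      Nat.dvd_gcd (orderOf_dvd_of_pow_eq_one hw3) (orderOf_dvd_of_pow_eq_one hwq)
    have hgcd : Nat.gcd 3 (q - 1) = 1 := by
      have := (Nat.Prime.coprime_iff_not_dvd (by norm_num)).mpr h3'
      exact this
    rw [hgcd, Nat.dvd_one, orderOf_eq_one_iff] at hdvd
    field_simp at hdvd
    exact hdvd
  have hcubeAsurj : ∀ a ∈ A1, ∃ b ∈ A1, b ^ 3 = a := by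
    have himgsub : A1.image (fun b : K => b ^ 3) ⊆ A1 := by
      intro x hx
      obtain ⟨b, hb, rfl⟩ := mem_image.mp hx
      exact hcubeAmem b hb
    have heq : A1.image (fun b : K => b ^ 3) = A1 := by
      apply eq_of_subset_of_card_le himgsub
      rw [card_image_of_injOn (fun x hx y hy => hcubeAinj x hx y hy)]
    intro a ha
    rw [← heq] at ha
    obtain ⟨b, hb, hba⟩ := mem_image.mp ha
    exact ⟨b, hb, hba⟩
  -- characterization of nonzero cubes
  have hHiff : ∀ t : K, (∃ c : K, c ≠ 0 ∧ t = c ^ 3) ↔ (∃ a ∈ A1, ∃ v ∈ U3, t = a * v) := by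
    intro t
    constructor
    · rintro ⟨c, hc0, rfl⟩
      obtain ⟨a, ha, u, hu, rfl⟩ := hdecomp c hc0
      refine ⟨a ^ 3, hcubeAmem a ha, u ^ 3, ?_, by rw [mul_pow]⟩
      rw [hU3]; exact mem_image.mpr ⟨u, hu, rfl⟩
    · rintro ⟨a, ha, v, hv, rfl⟩
      rw [hU3] at hv
      obtain ⟨u, hu, rfl⟩ := mem_image.mp hv
      obtain ⟨b, hb, rfl⟩ := hcubeAsurj a ha
      refine ⟨b * u, mul_ne_zero ((hmemA1 b).mp hb).2 (hUne u hu), by rw [mul_pow]⟩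
  -- φ maps A to A, and SA has q/2 elements
  have hφA : ∀ a ∈ A, φ a ∈ A := by
    intro a ha
    rw [hmemA] at ha ⊢
    show (a + a ^ 2) ^ q = a + a ^ 2
    rw [hfrob, ← pow_right_comm, ha]
  have hSAsub : SA ⊆ A := by
    intro b hb
    rw [hSA] at hb
    obtain ⟨a, ha, rfl⟩ := mem_image.mp hb
    exact hφA a ha
  have hSAcard : SA.card * 2 = q := by
    have hfibs : ∀ b ∈ A.image φ, (A.filter fun x => φ x = b).card = 2 := by
      intro b hb
      obtain ⟨y, hy, hyb⟩ := mem_image.mp hb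
      have : A.filter (fun x => φ x = b) = {y, y + 1} := by
        ext z
        simp only [mem_filter, mem_insert, mem_singleton, ← hyb, hfib]
        constructor
        · rintro ⟨-, h⟩; exact h
        · rintro (rfl | rfl)
          · exact ⟨hy, Or.inl rfl⟩
          · refine ⟨?_, Or.inr rfl⟩
            rw [hmemA] at hy ⊢
            rw [hfrob, hy, one_pow]
      rw [this, hpair]
    have := card_fiber_const A φ 2 hfibs
    rw [hAcard] at this
    rw [hSA]
    omega
  have hSA0 : (0 : K) ∈ SA := by
    rw [hSA]
    refine mem_image.mpr ⟨0, hA0, ?_⟩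
    show (0 : K) + 0 ^ 2 = 0
    simp
  -- the membership criterion : t ∈ T ↔ R t ∈ SA
  have hRφ : ∀ y : K, R (φ y) = φ (R y) := by
    intro y
    show (y + y ^ 2) ^ q + (y + y ^ 2) = (y ^ q + y) + (y ^ q + y) ^ 2
    rw [hfrob, hsq, ← pow_right_comm]
    ring
  have hTiff : ∀ t : K, t ∈ T ↔ R t ∈ SA := by
    set T' : Finset K := univ.filter (fun t : K => R t ∈ SA) with hT'
    have hsubT : T ⊆ T' := by
      intro t ht
      rw [hT] at ht
      obtain ⟨y, -, rfl⟩ := mem_image.mp ht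
      rw [hT', mem_filter]
      refine ⟨mem_univ _, ?_⟩
      rw [hRφ y, hSA]
      exact mem_image.mpr ⟨R y, hRA y, rfl⟩
    have hT'card : T'.card * 2 = q ^ 2 := by
      have himgT' : T'.image R = SA := by
        apply Finset.Subset.antisymm
        · intro b hb
          obtain ⟨t, ht, rfl⟩ := mem_image.mp hb
          rw [hT', mem_filter] at ht
          exact ht.2
        · intro b hb
          have hbA : b ∈ A := hSAsub hb
          rw [← himR] at hbA
          obtain ⟨t, -, rfl⟩ := mem_image.mp hbA
          exact mem_image.mpr ⟨t, by rw [hT', mem_filter]; exact ⟨mem_univ _, hb⟩, rfl⟩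
      have hfibs : ∀ b ∈ T'.image R, (T'.filter fun x => R x = b).card = q := by
        intro b hb
        obtain ⟨t₀, ht₀, rfl⟩ := mem_image.mp hb
        have : T'.filter (fun x => R x = R t₀) = univ.filter (fun x => R x = R t₀) := by
          ext z
          simp only [mem_filter, mem_univ, true_and, hT']
          constructor
          · rintro ⟨-, h⟩; exact h
          · intro h
            have ht₀' : R t₀ ∈ SA := by rw [hT', mem_filter] at ht₀; exact ht₀.2
            exact ⟨by rw [h]; exact ht₀', h⟩
        rw [this, hRfiber t₀, card_image_of_injective _ (add_right_injective t₀), hAcard]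
      have := card_fiber_const T' R q hfibs
      rw [himgT'] at this
      calc T'.card * 2 = SA.card * q * 2 := by rw [← this]
        _ = (SA.card * 2) * q := by ring
        _ = q * q := by rw [hSAcard]
        _ = q ^ 2 := (pow_two q).symm
    have hTT' : T = T' := by
      apply eq_of_subset_of_card_le hsubT
      omega
    intro t
    rw [hTT', hT', mem_filter]
    simp
  -- computation of R on products a * v with a ∈ A
  have hRmul : ∀ a v : K, a ^ q = a → R (a * v) = a * (v ^ q + v) := by
    intro a v ha
    show (a * v) ^ q + a * v = a * (v ^ q + v)
    rw [mul_pow, ha]; ring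
  have hcv_zero : ∀ v : K, v ∈ U → (v ^ q + v = 0 ↔ v = 1) := by
    intro v hv
    constructor
    · intro h
      have hvq : v ^ q = v := by
        have := eq_neg_of_add_eq_zero_left h
        rwa [hneg] at this
      exact hAU v (hUne v hv) hvq ((hmemU v).mp hv)
    · rintro rfl
      rw [one_pow]; exact h2 1
  have hcvA1 : ∀ v : K, v ∈ U → v ≠ 1 → (v ^ q + v) ∈ A1 := by
    intro v hv h1
    rw [hmemA1]
    constructor
    · rw [hfrob, hqq]; ring
    · intro h0
      exact h1 ((hcv_zero v hv).mp h0)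
  -- count for v = 1
  have hcount1 : (A1.filter fun a => a * (1 : K) ∈ T).card = q - 1 := by
    have : A1.filter (fun a => a * (1 : K) ∈ T) = A1 := by
      apply filter_true_of_mem
      intro a ha
      rw [mul_one, hTiff]
      have haq : a ^ q = a := ((hmemA1 a).mp ha).1
      have : R a = 0 := by
        show a ^ q + a = 0
        rw [haq]; exact h2 a
      rw [this]; exact hSA0
    rw [this, hA1card]
  -- count for v ≠ 1
  have hcountv : ∀ v : K, v ∈ U → v ≠ 1 → (A1.filter fun a => a * v ∈ T).card = SA.card - 1 := by
    intro v hv h1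
    have hc := hcvA1 v hv h1
    rw [hmemA1] at hc
    obtain ⟨hcq, hc0⟩ := hc
    have hcrit : ∀ a : K, a ∈ A1 → (a * v ∈ T ↔ a * (v ^ q + v) ∈ SA) := by
      intro a ha
      rw [hTiff, hRmul a v ((hmemA1 a).mp ha).1]
    have hbij : (A1.filter fun a => a * v ∈ T).card = (SA.erase 0).card := by
      apply Finset.card_bij (fun a _ => a * (v ^ q + v))
      · intro a ha
        rw [mem_filter] at ha
        rw [mem_erase]
        refine ⟨mul_ne_zero ((hmemA1 a).mp ha.1).2 hc0, ?_⟩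
        exact (hcrit a ha.1).mp ha.2
      · intro a₁ ha₁ a₂ ha₂ h
        exact mul_right_cancel₀ hc0 h
      · intro b hb
        rw [mem_erase] at hb
        obtain ⟨hb0, hbSA⟩ := hb
        have hbA1 : b ∈ A1 := by
          rw [hmemA1]
          exact ⟨(hmemA b).mp (hSAsub hbSA), hb0⟩
        set a : K := b * (v ^ q + v)⁻¹ with ha
        have haA1 : a ∈ A1 := by
          rw [hmemA1]
          constructor
          · rw [ha, mul_pow, inv_pow, hcq, ((hmemA1 b).mp hbA1).1]
          · exact mul_ne_zero hb0 (inv_ne_zero hc0)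
        have hab : a * (v ^ q + v) = b := by
          rw [ha, mul_assoc, inv_mul_cancel₀ hc0, mul_one]
        refine ⟨a, ?_, hab⟩
        rw [mem_filter]
        refine ⟨haA1, ?_⟩
        rw [hcrit a haA1, hab]
        exact hbSA
    rw [hbij, card_erase_of_mem hSA0]
  -- the main count
  set PP : Finset (K × K) := (A1 ×ˢ U3).filter (fun p => p.1 * p.2 ∈ T) with hPP
  have hstep2 : (univ.filter fun y : K => ∃ c : K, c ≠ 0 ∧ y + y ^ 2 = c ^ 3).card
      = ((univ.filter fun y : K => ∃ c : K, c ≠ 0 ∧ y + y ^ 2 = c ^ 3).image φ).card * 2 := by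
    apply card_fiber_const
    intro b hb
    obtain ⟨y₀, hy₀s, hy₀⟩ := mem_image.mp hb
    rw [mem_filter] at hy₀s
    obtain ⟨-, c, hc0, hcy⟩ := hy₀s
    have hfilt : (univ.filter fun y : K => ∃ c : K, c ≠ 0 ∧ y + y ^ 2 = c ^ 3).filter
        (fun z => φ z = b) = {y₀, y₀ + 1} := by
      ext z
      rw [mem_filter, mem_insert, mem_singleton]
      constructor
      · rintro ⟨-, h⟩
        rw [← hy₀] at h
        exact (hfib y₀ z).mp h
      · intro h
        have hz : φ z = φ y₀ := (hfib y₀ z).mpr h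
        refine ⟨?_, by rw [hz, hy₀]⟩
        rw [mem_filter]
        refine ⟨mem_univ _, c, hc0, ?_⟩
        rw [show z + z ^ 2 = φ z from rfl, hz]
        exact hcy
    rw [hfilt, hpair]
  have himgs : (univ.filter fun y : K => ∃ c : K, c ≠ 0 ∧ y + y ^ 2 = c ^ 3).image φ
      = PP.image (fun p => p.1 * p.2) := by
    ext b
    constructor
    · intro hb
      obtain ⟨y, hy, rfl⟩ := mem_image.mp hb
      rw [mem_filter] at hy
      obtain ⟨-, c, hc0, hcy⟩ := hy
      obtain ⟨a, ha, v, hv, hav⟩ := (hHiff (φ y)).mp ⟨c, hc0, hcy⟩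
      refine mem_image.mpr ⟨(a, v), ?_, hav.symm⟩
      rw [hPP, mem_filter, mem_product]
      refine ⟨⟨ha, hv⟩, ?_⟩
      show a * v ∈ T
      rw [← hav, hT]
      exact mem_image.mpr ⟨y, mem_univ _, rfl⟩
    · intro hb
      obtain ⟨p, hp, rfl⟩ := mem_image.mp hb
      rw [hPP, mem_filter, mem_product] at hp
      obtain ⟨⟨ha, hv⟩, hpT⟩ := hp
      rw [hT] at hpT
      obtain ⟨y, -, hy⟩ := mem_image.mp hpT
      refine mem_image.mpr ⟨y, ?_, hy⟩
      rw [mem_filter]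
      refine ⟨mem_univ _, ?_⟩
      obtain ⟨c, hc0, hc3⟩ := (hHiff (p.1 * p.2)).mpr ⟨p.1, ha, p.2, hv, rfl⟩
      refine ⟨c, hc0, ?_⟩
      rw [show y + y ^ 2 = φ y from rfl, hy]
      exact hc3
  have hPPcard : (PP.image fun p : K × K => p.1 * p.2).card = PP.card := by
    apply card_image_of_injOn
    intro p hp p' hp' h
    rw [mem_coe, hPP, mem_filter, mem_product] at hp hp'
    obtain ⟨⟨ha, hv⟩, -⟩ := hp
    obtain ⟨⟨ha', hv'⟩, -⟩ := hp'
    obtain ⟨h1, h2'⟩ := hinjAU p.1 ha p.2 (hU3sub hv) p'.1 ha' p'.2 (hU3sub hv') h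
    exact Prod.ext h1 h2'
  have hPPsum : PP.card = ∑ v ∈ U3, (A1.filter fun a => a * v ∈ T).card := by
    have hmem : ∀ p ∈ PP, p.2 ∈ U3 := by
      intro p hp
      rw [hPP, mem_filter, mem_product] at hp
      exact hp.1.2
    rw [card_eq_sum_card_fiberwise hmem]
    apply Finset.sum_congr rfl
    intro v hv
    apply Finset.card_bij (fun p (_ : p ∈ PP.filter (fun p => p.2 = v)) => p.1)
    · intro p hp
      rw [mem_filter] at hp
      obtain ⟨hp1, hp2⟩ := hp
      rw [hPP, mem_filter, mem_product] at hp1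
      rw [mem_filter]
      refine ⟨hp1.1.1, ?_⟩
      rw [← hp2]
      exact hp1.2
    · intro p₁ h₁ p₂ h₂ h
      have e₁ : p₁.2 = v := (mem_filter.mp h₁).2
      have e₂ : p₂.2 = v := (mem_filter.mp h₂).2
      exact Prod.ext h (by rw [e₁, e₂])
    · intro a ha
      rw [mem_filter] at ha
      refine ⟨(a, v), ?_, rfl⟩
      rw [mem_filter, hPP, mem_filter, mem_product]
      exact ⟨⟨⟨ha.1, hv⟩, ha.2⟩, rfl⟩
  have hsum : ∑ v ∈ U3, (A1.filter fun a => a * v ∈ T).card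
      = (q - 1) + (U3.card - 1) * (SA.card - 1) := by
    rw [← Finset.add_sum_erase U3 _ hU3one, hcount1,
      Finset.sum_congr rfl
        (fun v hv => hcountv v (hU3sub (mem_of_mem_erase hv)) (ne_of_mem_erase hv)),
      Finset.sum_const, card_erase_of_mem hU3one, smul_eq_mul]
  have hscard : (univ.filter fun y : K => ∃ c : K, c ≠ 0 ∧ y + y ^ 2 = c ^ 3).card
      = ((q - 1) + (U3.card - 1) * (SA.card - 1)) * 2 := by
    rw [hstep2, himgs, hPPcard, hPPsum, hsum]
  -- final arithmetic
  have hSA1 : 1 ≤ SA.card := card_pos.mpr ⟨0, hSA0⟩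
  have hU31 : 1 ≤ U3.card := card_pos.mpr ⟨1, hU3one⟩
  have hsaQ : (SA.card : ℚ) * 2 = (q : ℚ) := by exact_mod_cast hSAcard
  have hu3Q : (U3.card : ℚ) * 3 = (q : ℚ) + 1 := by exact_mod_cast hU3card
  have hqQ : ((q : ℕ) : ℚ) = 2 ^ f := by rw [hqdef]; push_cast; ring
  rw [Nat.card_eq_fintype_card, Fintype.card_subtype]
  rw [hscard]
  rw [← hqQ]
  push_cast [Nat.cast_sub hSA1, Nat.cast_sub hU31, Nat.cast_sub (show 1 ≤ q by omega)]
  linear_combination ((U3.card : ℚ) - 1) * hsaQ + (((q : ℚ) - 2) / 3) * hu3Q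

end CardTraceCubeAux

/-- Let `q = 2^f` with `f` odd and let `k₂37 = F_{q²}`. Then the number `N₁` of elements
`y ∈ k₂` such that `y + y²` is a nonzero cube in `k₂ˣ` equals `(q² + 2q − 2)/3`. -/
theorem card_trace_cube_count (f : ℕ) (hf : Odd f) (k₂ : Type*) [Field k₂] [Fintype k₂]
    (hcard : Fintype.card k₂ = (2 ^ f) ^ 2) :
    (Nat.card {y : k₂ // ∃ c : k₂, c ≠ 0 ∧ y + y ^ 2 = c ^ 3} : ℚ) =
      ((2 ^ f : ℚ) ^ 2 + 2 * 2 ^ f - 2) / 3 := by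
  have hp : Nat.Prime (ringChar k₂) := CharP.char_is_prime k₂ (ringChar k₂)
  obtain ⟨n, hpp, hn⟩ := FiniteField.card k₂ (ringChar k₂)
  have hp2 : ringChar k₂ = 2 := by
    have hc2 : Fintype.card k₂ = 2 ^ (f * 2) := by rw [hcard, ← pow_mul]
    rw [hn] at hc2
    have hdvd : ringChar k₂ ∣ 2 ^ (f * 2) := by
      rw [← hc2]
      exact dvd_pow_self _ n.pos.ne'
    have := hp.dvd_of_dvd_pow hdvd
    exact (Nat.prime_dvd_prime_iff_eq hp Nat.prime_two).mp this
  haveI : CharP k₂ 2 := hp2 ▸ ringChar.charP k₂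
  exact CardTraceCubeAux.core f hf hcard
end

section
/- Let q = 2^f with f odd, k₂ = F_{q²}, χ a nontrivial character of k₂×/(k₂×)³ (a nontrivial cubic character of k₂×), and ψ(x) = (−1)^{Tr_{k₂/F₂}(x)} the canonical additive character. Then the normalized Gauss sum q^{−1} Σ_{x∈k₂×} χ(x)^{−1} ψ(x) equals 1. -/
open Finset

lemma sum_field_split {k : Type*} [Field k] [Fintype k] [DecidableEq k] (F : k → ℂ) :
    ∑ a : k, F a = F 0 + ∑ x : kˣ, F (x : k) := by
  rw [← Finset.sum_erase_add Finset.univ F (Finset.mem_univ 0), add_comm]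
  congr 1
  refine Finset.sum_bij (fun (x : kˣ) _ => (x : k)) ?_ ?_ ?_ ?_ |>.symm
  · exact fun x _ => Finset.mem_erase.mpr ⟨x.ne_zero, Finset.mem_univ _⟩
  · exact fun x _ y _ h => Units.ext h
  · exact fun a ha => ⟨Units.mk0 a (Finset.mem_erase.mp ha).1, Finset.mem_univ _, rfl⟩
  · exact fun x _ => rfl

/-- Let `q = 2^f` with `f` odd, `k₂ = F_{q²}`, `χ` a nontrivial cubic character of `k₂ˣ`
(i.e. a nontrivial character of `k₂ˣ/(k₂ˣ)³`), and `ψ(x) = (−1)^{Tr_{k₂/F₂}(x)}` the canonical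
additive character. Then the normalized Gauss sum `q⁻¹ ∑_{x ∈ k₂ˣ} χ(x)⁻¹ ψ(x)` equals `1`. -/
theorem gauss_sum_cubic_char (f : ℕ) (hf : Odd f) (k₂ : Type*) [Field k₂] [Fintype k₂] [DecidableEq k₂]
    [Algebra (ZMod 2) k₂] (hcard : Fintype.card k₂ = (2 ^ f) ^ 2)
    (χ : k₂ˣ →* ℂˣ) (hχ3 : χ ^ 3 = 1) (hχ : χ ≠ 1)
    (ψ : k₂ → ℂ)
    (hψ : ∀ x : k₂, ψ x = if Algebra.trace (ZMod 2) k₂ x = 0 then 1 else -1) :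
    ((2 : ℂ) ^ f)⁻¹ * ∑ x : k₂ˣ, ((χ x : ℂ))⁻¹ * ψ (x : k₂) = 1 := by
  classical
  haveI : Fact (Nat.Prime 2) := ⟨Nat.prime_two⟩
  haveI hchar : CharP k₂ 2 := charP_of_injective_algebraMap (algebraMap (ZMod 2) k₂).injective 2
  haveI : Module.Finite (ZMod 2) k₂ := Module.Finite.of_finite
  -- pointwise cube root of unity property
  have hx3 : ∀ x : k₂ˣ, (χ x) ^ 3 = 1 := by
    intro x
    have := congrFun (congrArg (fun g : k₂ˣ →* ℂˣ => (g : k₂ˣ → ℂˣ)) hχ3) x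
    simpa using this
  have hx3' : ∀ x : k₂ˣ, ((χ x : ℂ)) ^ 3 = 1 := by
    intro x; simpa using congrArg (Units.val) (hx3 x)
  -- 2^f = 3k+2
  obtain ⟨m, hm⟩ := hf
  have h4m : ∀ j : ℕ, 4 ^ j % 3 = 1 := by
    intro j
    induction j with
    | zero => rfl
    | succ n ih => rw [pow_succ, Nat.mul_mod, ih]
  obtain ⟨k, hk⟩ : ∃ k, 2 ^ f = 3 * k + 2 := by
    refine ⟨2 * (4 ^ m / 3), ?_⟩
    have h2f : 2 ^ f = 4 ^ m * 2 := by
      rw [hm, pow_add, pow_mul]; norm_num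
    have := h4m m
    omega
  -- trace Frobenius invariance
  have htr : ∀ y : k₂, Algebra.trace (ZMod 2) k₂ (y ^ 2) = Algebra.trace (ZMod 2) k₂ y := by
    intro y
    let σ : k₂ ≃ₐ[ZMod 2] k₂ :=
      AlgEquiv.ofRingEquiv (f := frobeniusEquiv k₂ 2) (fun r => by
        show algebraMap (ZMod 2) k₂ r ^ 2 = algebraMap (ZMod 2) k₂ r
        rw [← map_pow]
        congr 1
        exact ZMod.pow_card r)
    exact Algebra.trace_eq_of_algEquiv σ y
  have htrf : ∀ (n : ℕ) (y : k₂), Algebra.trace (ZMod 2) k₂ (y ^ 2 ^ n) = Algebra.trace (ZMod 2) k₂ y := by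
    intro n
    induction n with
    | zero => simp
    | succ n ih => intro y; rw [pow_succ, pow_mul, htr, ih]
  -- ψ as an additive character
  have htr0 : Algebra.trace (ZMod 2) k₂ 0 = 0 := map_zero _
  have hψadd : ∀ x y : k₂, ψ (x + y) = ψ x * ψ y := by
    intro x y
    rw [hψ, hψ, hψ, map_add]
    generalize Algebra.trace (ZMod 2) k₂ x = a
    generalize Algebra.trace (ZMod 2) k₂ y = b
    fin_cases a <;> fin_cases b <;>
      split_ifs <;> simp_all <;> contradiction
  set Ψ : AddChar k₂ ℂ :=
    { toFun := ψ
      map_zero_eq_one' := by rw [hψ, htr0]; simp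
      map_add_eq_mul' := hψadd } with hΨdef
  have hΨapp : ∀ x : k₂, Ψ x = ψ x := fun _ => rfl
  -- Ψ is nontrivial
  have hΨne : Ψ ≠ 1 := by
    haveI : Algebra.IsSeparable (ZMod 2) k₂ := inferInstance
    obtain ⟨b, hb⟩ : ∃ b : k₂, Algebra.trace (ZMod 2) k₂ b ≠ 0 := by
      by_contra h
      push_neg at h
      have hnd := traceForm_nondegenerate (ZMod 2) k₂
      exact one_ne_zero (hnd.1 1 (fun y => by simp [Algebra.traceForm_apply, h]))
    intro hcontra
    have : Ψ b = 1 := by rw [hcontra]; rfl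
    rw [hΨapp, hψ b, if_neg hb] at this
    norm_num at this
  -- the multiplicative character
  set χ' : MulChar k₂ ℂ := MulChar.ofUnitHom χ with hχ'def
  have hχ'app : ∀ x : k₂ˣ, χ' (x : k₂) = (χ x : ℂ) := fun x => MulChar.ofUnitHom_coe χ x
  have hχ'ne : χ' ≠ 1 := by
    intro h
    apply hχ
    ext x
    have h2 := DFunLike.congr_fun h ((x : k₂ˣ) : k₂)
    rw [hχ'app x, MulChar.one_apply_coe] at h2
    simpa using h2
  -- Frobenius reindexing: ∑ χ x ψ x = ∑ (χ x)⁻¹ ψ x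
  have hfrob : ∑ x : k₂ˣ, ((χ x : ℂ)) * ψ (x : k₂)
      = ∑ x : k₂ˣ, ((χ x : ℂ))⁻¹ * ψ (x : k₂) := by
    have hinj : Function.Injective (fun x : k₂ˣ => x ^ (2 ^ f)) := by
      intro x y hxy
      have h1 : ((x : k₂)) ^ (2 ^ f) = ((y : k₂)) ^ (2 ^ f) := by
        have := congrArg (Units.val) hxy
        simpa using this
      have h2 : iterateFrobenius k₂ 2 f (x : k₂) = iterateFrobenius k₂ 2 f (y : k₂) := by
        simpa [iterateFrobenius_def] using h1
      exact Units.ext ((iterateFrobenius k₂ 2 f).injective h2)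
    refine Fintype.sum_bijective _ (Finite.injective_iff_bijective.mp hinj) _ _ ?_
    intro x
    have hval : ((x ^ (2 ^ f) : k₂ˣ) : k₂) = ((x : k₂)) ^ (2 ^ f) := by simp
    have hchi : χ (x ^ (2 ^ f)) = (χ x)⁻¹ := by
      rw [map_pow, hk, pow_add, pow_mul, hx3 x, one_pow, one_mul]
      exact eq_inv_of_mul_eq_one_left (by rw [← pow_succ]; exact hx3 x)
    have hψeq : ψ (((x ^ (2 ^ f) : k₂ˣ) : k₂)) = ψ (x : k₂) := by
      rw [hval, hψ, hψ, htrf f]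
    rw [hψeq, hchi]
    simp
  -- Gauss sum identities
  have hΨinv : Ψ⁻¹ = Ψ := by
    ext x
    rw [AddChar.inv_apply, CharTwo.neg_eq]
  have hgauss : ∀ θ : MulChar k₂ ℂ, gaussSum θ Ψ = ∑ x : k₂ˣ, θ ((x : k₂ˣ) : k₂) * ψ (x : k₂) := by
    intro θ
    rw [gaussSum, sum_field_split (fun a => θ a * Ψ a)]
    rw [MulChar.map_zero, zero_mul, zero_add]
    rfl
  set G : ℂ := ∑ x : k₂ˣ, ((χ x : ℂ))⁻¹ * ψ (x : k₂) with hGdef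
  have hg1 : gaussSum χ' Ψ = G := by
    rw [hgauss]
    rw [show (∑ x : k₂ˣ, χ' ((x : k₂ˣ) : k₂) * ψ (x : k₂)) = ∑ x : k₂ˣ, ((χ x : ℂ)) * ψ (x : k₂)
      from Finset.sum_congr rfl (fun x _ => by rw [hχ'app])]
    exact hfrob
  have hg2 : gaussSum χ'⁻¹ Ψ = G := by
    rw [hgauss]
    refine Finset.sum_congr rfl (fun x _ => ?_)
    rw [MulChar.inv_apply_eq_inv', hχ'app]
  have hGG : G * G = ((2 : ℂ) ^ f) ^ 2 := by
    have key := gaussSum_mul_gaussSum_eq_card hχ'ne (AddChar.IsPrimitive.of_ne_one hΨne)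
    rw [hΨinv, hg1, hg2, hcard] at key
    rw [key]
    push_cast
    ring
  -- the cube root of unity ζ
  obtain ⟨x₀, hx₀⟩ := DFunLike.ne_iff.mp hχ
  set ζ : ℂ := (χ x₀ : ℂ) with hζdef
  have hζ3 : ζ ^ 3 = 1 := hx3' x₀
  have hζ1 : ζ ≠ 1 := by
    intro h
    exact hx₀ (by simpa using Units.val_eq_one.mp h)
  have hζ0 : ζ ≠ 0 := by
    intro h
    rw [h] at hζ3
    norm_num at hζ3
  have hquad : ζ ^ 2 + ζ + 1 = 0 := by
    have hfac : (ζ - 1) * (ζ ^ 2 + ζ + 1) = 0 := by linear_combination hζ3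
    rcases mul_eq_zero.mp hfac with h | h
    · exact absurd (sub_eq_zero.mp h) hζ1
    · exact h
  have hζ2ne1 : ζ ^ 2 ≠ 1 := by
    intro h
    apply hζ1
    have h3 : ζ ^ 3 = ζ * ζ ^ 2 := by ring
    rw [h3, h, mul_one] at hζ3
    exact hζ3
  have hζ2neζ : ζ ^ 2 ≠ ζ := by
    intro h
    rcases mul_eq_zero.mp (show ζ * (ζ - 1) = 0 by linear_combination h) with h' | h'
    · exact hζ0 h'
    · exact hζ1 (sub_eq_zero.mp h')
  have hval : ∀ x : k₂ˣ, (χ x : ℂ) = 1 ∨ (χ x : ℂ) = ζ ∨ (χ x : ℂ) = ζ ^ 2 := by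
    intro x
    have h3 := hx3' x
    have hfac : ((χ x : ℂ) - 1) * (((χ x : ℂ) - ζ) * ((χ x : ℂ) - ζ ^ 2)) = 0 := by
      linear_combination h3 + (-(χ x : ℂ) ^ 2 + (χ x : ℂ)) * hquad + ((χ x : ℂ) - 1) * hζ3
    rcases mul_eq_zero.mp hfac with h | h
    · exact Or.inl (sub_eq_zero.mp h)
    · rcases mul_eq_zero.mp h with h' | h'
      · exact Or.inr (Or.inl (sub_eq_zero.mp h'))
      · exact Or.inr (Or.inr (sub_eq_zero.mp h'))
  -- the three fibers
  set T0 := Finset.univ.filter (fun x : k₂ˣ => (χ x : ℂ) = 1) with hT0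
  set T1 := Finset.univ.filter (fun x : k₂ˣ => (χ x : ℂ) = ζ) with hT1
  set T2 := Finset.univ.filter (fun x : k₂ˣ => (χ x : ℂ) = ζ ^ 2) with hT2
  set E : Finset k₂ˣ → ℤ :=
    fun T => ∑ x ∈ T, (if Algebra.trace (ZMod 2) k₂ (x : k₂) = 0 then (1 : ℤ) else -1) with hE
  have hcast : ∀ T : Finset k₂ˣ, ((E T : ℤ) : ℂ) = ∑ x ∈ T, ψ (x : k₂) := by
    intro T
    rw [hE]
    push_cast
    refine Finset.sum_congr rfl (fun x _ => ?_)
    rw [hψ]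
  have hpart : ∀ h : k₂ˣ → ℂ,
      ∑ x : k₂ˣ, h x = (∑ x ∈ T0, h x) + ((∑ x ∈ T1, h x) + ∑ x ∈ T2, h x) := by
    intro h
    rw [← Finset.sum_filter_add_sum_filter_not Finset.univ (fun x : k₂ˣ => (χ x : ℂ) = 1) h]
    congr 1
    rw [← Finset.sum_filter_add_sum_filter_not
      (Finset.univ.filter (fun x : k₂ˣ => ¬(χ x : ℂ) = 1)) (fun x : k₂ˣ => (χ x : ℂ) = ζ) h,
      Finset.filter_filter, Finset.filter_filter]
    congr 1
    · apply Finset.sum_congr _ (fun _ _ => rfl)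
      ext x
      simp only [Finset.mem_filter, Finset.mem_univ, true_and, hT1]
      constructor
      · exact fun h => h.2
      · exact fun h => ⟨fun h1 => hζ1 (h1 ▸ h).symm, h⟩
    · apply Finset.sum_congr _ (fun _ _ => rfl)
      ext x
      simp only [Finset.mem_filter, Finset.mem_univ, true_and, hT2]
      constructor
      · rintro ⟨h1, h2⟩
        rcases hval x with h | h | h
        · exact absurd h h1
        · exact absurd h h2
        · exact h
      · intro h
        exact ⟨fun h1 => hζ2ne1 (h ▸ h1), fun h1 => hζ2neζ (h ▸ h1)⟩
  -- sum of all ψ over units is -1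
  have hψ0 : ψ 0 = 1 := by rw [hψ, htr0]; simp
  have hsum0 : ((E T0 + E T1 + E T2 : ℤ) : ℂ) = -1 := by
    have h0 : ∑ a : k₂, ψ a = 0 := AddChar.sum_eq_zero_of_ne_one hΨne
    rw [sum_field_split ψ, hψ0] at h0
    push_cast
    rw [hcast, hcast, hcast]
    rw [hpart (fun x : k₂ˣ => ψ (x : k₂))] at h0
    linear_combination h0
  -- two expressions for G
  have hζinv : ζ⁻¹ = ζ ^ 2 :=
    (eq_inv_of_mul_eq_one_left (by linear_combination hζ3)).symm
  have hζ2inv : (ζ ^ 2)⁻¹ = ζ :=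
    (eq_inv_of_mul_eq_one_left (by linear_combination hζ3)).symm
  have fiber_sum : ∀ (c : ℂ) (T : Finset k₂ˣ), (∀ x ∈ T, (χ x : ℂ) = c) →
      ∀ g : ℂ → ℂ, (∑ x ∈ T, g (χ x : ℂ) * ψ (x : k₂)) = g c * E T := by
    intro c T hT g
    rw [hcast, Finset.mul_sum]
    exact Finset.sum_congr rfl (fun x hx => by rw [hT x hx])
  have hmem : ∀ (c : ℂ) (T : Finset k₂ˣ), T = Finset.univ.filter (fun x : k₂ˣ => (χ x : ℂ) = c) →
      ∀ x ∈ T, (χ x : ℂ) = c := by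
    intro c T hTdef x hx
    rw [hTdef] at hx
    exact (Finset.mem_filter.mp hx).2
  have hA : G = (E T0 : ℂ) + (ζ ^ 2 * E T1 + ζ * E T2) := by
    rw [hGdef, hpart (fun x : k₂ˣ => (χ x : ℂ)⁻¹ * ψ (x : k₂)),
      fiber_sum 1 T0 (hmem 1 T0 hT0) (fun z => z⁻¹),
      fiber_sum ζ T1 (hmem ζ T1 hT1) (fun z => z⁻¹),
      fiber_sum (ζ ^ 2) T2 (hmem (ζ ^ 2) T2 hT2) (fun z => z⁻¹)]
    rw [hζinv, hζ2inv]
    norm_num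
  have hB : G = (E T0 : ℂ) + (ζ * E T1 + ζ ^ 2 * E T2) := by
    rw [← hfrob, hpart (fun x : k₂ˣ => (χ x : ℂ) * ψ (x : k₂)),
      fiber_sum 1 T0 (hmem 1 T0 hT0) (fun z => z),
      fiber_sum ζ T1 (hmem ζ T1 hT1) (fun z => z),
      fiber_sum (ζ ^ 2) T2 (hmem (ζ ^ 2) T2 hT2) (fun z => z)]
    norm_num
  -- conclude n1 = n2
  have hn12 : ((E T2 : ℤ) : ℂ) = ((E T1 : ℤ) : ℂ) := by
    have hz : (ζ ^ 2 - ζ) * ((E T1 : ℂ) - (E T2 : ℂ)) = 0 := by linear_combination hB - hA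
    rcases mul_eq_zero.mp hz with h | h
    · exact absurd (by linear_combination h) hζ2neζ
    · linear_combination -h
  have hGval : G = ((E T0 - E T1 : ℤ) : ℂ) := by
    push_cast
    linear_combination hA + (E T1 : ℂ) * hquad + ζ * hn12
  -- integer arithmetic
  have hintsq : (E T0 - E T1) * (E T0 - E T1) = (2 ^ f : ℤ) * (2 ^ f : ℤ) := by
    have : ((E T0 - E T1 : ℤ) : ℂ) * ((E T0 - E T1 : ℤ) : ℂ)
        = ((2 ^ f : ℤ) : ℂ) * ((2 ^ f : ℤ) : ℂ) := by
      rw [← hGval]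
      rw [hGG]
      push_cast
      ring
    exact_mod_cast this
  have hintsum : E T0 + E T1 + E T2 = -1 := by exact_mod_cast hsum0
  have hintn12 : E T2 = E T1 := by exact_mod_cast hn12
  have hkz : (2 : ℤ) ^ f = 3 * (k : ℤ) + 2 := by exact_mod_cast hk
  have hfinal : E T0 - E T1 = 2 ^ f := by
    have hz : ((E T0 - E T1) - 2 ^ f) * ((E T0 - E T1) + 2 ^ f) = 0 := by
      linear_combination hintsq
    rcases mul_eq_zero.mp hz with h | h
    · omega
    · omega
  -- finish
  have hG2f : G = (2 : ℂ) ^ f := by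
    rw [hGval, hfinal]
    push_cast
    ring
  rw [hG2f]
  exact inv_mul_cancel₀ (pow_ne_zero _ two_ne_zero)
end
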